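/- arXiv:2101.00413 — 7 statements merged into one kernel-verified Lean document; each statement's English description precedes it below -/
import Mathlib

section
/- Let O be a discrete valuation ring in which 2 is a unit, with fraction field E, and let σ : E → E be a ring automorphism with σ ≠ id, σ ∘ σ = id, and σ(O) = O. For a matrix g = (g_ij) over E write ḡ = (σ(g_ij)). Let J ∈ GL_{2n+1}(E) be the block matrix [[0,0,Id_n],[0,1,0],[Id_n,0,0]], let G = {g ∈ GL_{2n+1}(E) : ᵗḡ·J·g = J}, let 𝔓₀ = {diag(a, λ, ᵗā⁻¹) : a ∈ GL_n(O), λ ∈ O^×, λ·σ(λ) = 1} and Z(L) = {diag(a·Id_n, λ, σ(a)⁻¹·Id_n) : a ∈ E^×, λ ∈ E^×, λ·σ(λ) = 1}, all viewed as subgroups of G. Then the normalizer of 𝔓₀ in G equals (𝔓₀·Z(L)) ∪ (𝔓₀·Z(L))·J; that is, it is generated by 𝔓₀, Z(L) and J, and since J ∉ 𝔓₀·Z(L) and J² = 1, it is the internal semidirect product (𝔓₀·Z(L)) ⋊ ⟨J⟩. -/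
open Matrix
open scoped Pointwise

namespace Stmt0

variable (n : ℕ) (E : Type*) [Field E]

/-- The index type for `(2n+1) × (2n+1)` block matrices. -/
abbrev ι (n : ℕ) : Type := Fin n ⊕ (Unit ⊕ Fin n)

/-- The antidiagonal block matrix `J = [[0,0,Id_n],[0,1,0],[Id_n,0,0]]`. -/
def Jmat : Matrix (ι n) (ι n) E := fun i j =>
  match i, j with
  | Sum.inl i, Sum.inr (Sum.inr j) => if i = j then 1 else 0
  | Sum.inr (Sum.inl _), Sum.inr (Sum.inl _) => 1
  | Sum.inr (Sum.inr i), Sum.inl j => if i = j then 1 else 0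
  | _, _ => 0

/-- The block-diagonal matrix `diag(a, λ, c)`. -/
def diagBlock {n : ℕ} {E : Type*} [Field E]
    (a : Matrix (Fin n) (Fin n) E) (lam : E) (c : Matrix (Fin n) (Fin n) E) :
    Matrix (ι n) (ι n) E := fun i j =>
  match i, j with
  | Sum.inl i, Sum.inl j => a i j
  | Sum.inr (Sum.inl _), Sum.inr (Sum.inl _) => lam
  | Sum.inr (Sum.inr i), Sum.inr (Sum.inr j) => c i j
  | _, _ => 0

/-- The unitary group `G = U(n,n+1) = {g ∈ GL_{2n+1}(E) | ᵗḡ·J·g = J}`, where `bar` is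
the entrywise application of the automorphism `σ`. -/
def Gset (σ : E ≃+* E) : Set (Matrix (ι n) (ι n) E)ˣ :=
  {g | ((g : Matrix (ι n) (ι n) E).map σ)ᵀ * Jmat n E * (g : Matrix (ι n) (ι n) E)
        = Jmat n E}

/-- The subgroup `𝔓₀ = {diag(a, λ, ᵗā⁻¹) | a ∈ GL_n(O), λ ∈ O^×, λ·σ(λ) = 1}`. -/
def P0set (O : Subring E) (σ : E ≃+* E) : Set (Matrix (ι n) (ι n) E)ˣ :=
  {g | ∃ (a : Matrix (Fin n) (Fin n) E) (lam : E),
    (∀ i j, a i j ∈ O) ∧ IsUnit a.det ∧ (∀ i j, a⁻¹ i j ∈ O) ∧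
    lam ∈ O ∧ lam⁻¹ ∈ O ∧ lam * σ lam = 1 ∧
    (g : Matrix (ι n) (ι n) E) = diagBlock a lam ((a.map σ)ᵀ)⁻¹}

/-- The center `Z(L) = {diag(a·Id_n, λ, σ(a)⁻¹·Id_n) | a, λ ∈ E^×, λ·σ(λ) = 1}` of the
Siegel Levi subgroup. -/
def ZLset (σ : E ≃+* E) : Set (Matrix (ι n) (ι n) E)ˣ :=
  {g | ∃ a lam : E, a ≠ 0 ∧ lam * σ lam = 1 ∧
    (g : Matrix (ι n) (ι n) E)
      = diagBlock (a • (1 : Matrix (Fin n) (Fin n) E)) lam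
          ((σ a)⁻¹ • (1 : Matrix (Fin n) (Fin n) E))}

section Aux
set_option linter.unnecessarySeqFocus false
variable {n : ℕ} {E : Type*} [Field E]


lemma diagBlock_mul (a a' c c' : Matrix (Fin n) (Fin n) E) (l l' : E) :
    diagBlock a l c * diagBlock a' l' c' = diagBlock (a * a') (l * l') (c * c') := by
  funext i j
  cases i with
  | inl i =>
    cases j with
    | inl j => simp [Matrix.mul_apply, diagBlock, Fintype.sum_sum_type]
    | inr j => cases j <;> simp [Matrix.mul_apply, diagBlock, Fintype.sum_sum_type]
  | inr i =>
    cases i with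
    | inl i =>
      cases j with
      | inl j => simp [Matrix.mul_apply, diagBlock, Fintype.sum_sum_type]
      | inr j => cases j <;> simp [Matrix.mul_apply, diagBlock, Fintype.sum_sum_type]
    | inr i =>
      cases j with
      | inl j => simp [Matrix.mul_apply, diagBlock, Fintype.sum_sum_type]
      | inr j => cases j <;> simp [Matrix.mul_apply, diagBlock, Fintype.sum_sum_type]

lemma diagBlock_one : diagBlock (1 : Matrix (Fin n) (Fin n) E) 1 1 = 1 := by
  funext i j
  cases i <;> cases j <;>
    simp [diagBlock, Matrix.one_apply] <;>
    rename_i i j <;> (try cases i) <;> (try cases j) <;>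
    simp [diagBlock, Matrix.one_apply]

lemma diagBlock_sub (a a' c c' : Matrix (Fin n) (Fin n) E) (l l' : E) :
    diagBlock a l c - diagBlock a' l' c' = diagBlock (a - a') (l - l') (c - c') := by
  funext i j
  cases i <;> cases j <;>
    simp [diagBlock, Matrix.sub_apply] <;>
    rename_i i j <;> (try cases i) <;> (try cases j) <;>
    simp [diagBlock]

lemma diagBlock_smul (α : E) (a c : Matrix (Fin n) (Fin n) E) (l : E) :
    α • diagBlock a l c = diagBlock (α • a) (α * l) (α • c) := by
  funext i j
  cases i <;> cases j <;>
    simp [diagBlock, Matrix.smul_apply] <;>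
    rename_i i j <;> (try cases i) <;> (try cases j) <;>
    simp [diagBlock]

lemma diagBlock_transpose (a c : Matrix (Fin n) (Fin n) E) (l : E) :
    (diagBlock a l c)ᵀ = diagBlock aᵀ l cᵀ := by
  funext i j
  cases i <;> cases j <;>
    simp [diagBlock, Matrix.transpose_apply] <;>
    rename_i i j <;> (try cases i) <;> (try cases j) <;>
    simp [diagBlock]

lemma diagBlock_map (f : E → E) (h0 : f 0 = 0) (a c : Matrix (Fin n) (Fin n) E) (l : E) :
    (diagBlock a l c).map f = diagBlock (a.map f) (f l) (c.map f) := by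
  funext i j
  cases i <;> cases j <;>
    simp [diagBlock, Matrix.map_apply, h0] <;>
    rename_i i j <;> (try cases i) <;> (try cases j) <;>
    simp [diagBlock, h0]

lemma diagBlock_inj₁ {a a' c c' : Matrix (Fin n) (Fin n) E} {l l' : E}
    (h : diagBlock a l c = diagBlock a' l' c') : a = a' := by
  funext i j
  exact congrFun (congrFun h (Sum.inl i)) (Sum.inl j)

lemma diagBlock_inj₂ {a a' c c' : Matrix (Fin n) (Fin n) E} {l l' : E}
    (h : diagBlock a l c = diagBlock a' l' c') : l = l' :=
  congrFun (congrFun h (Sum.inr (Sum.inl ()))) (Sum.inr (Sum.inl ()))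

lemma diagBlock_inj₃ {a a' c c' : Matrix (Fin n) (Fin n) E} {l l' : E}
    (h : diagBlock a l c = diagBlock a' l' c') : c = c' := by
  funext i j
  exact congrFun (congrFun h (Sum.inr (Sum.inr i))) (Sum.inr (Sum.inr j))

lemma Jmat_mul_Jmat : Jmat n E * Jmat n E = 1 := by
  funext i j
  cases i <;> cases j <;>
    simp [Matrix.mul_apply, Jmat, Fintype.sum_sum_type, Matrix.one_apply] <;>
    rename_i i j <;> (try cases i) <;> (try cases j) <;>
    simp [Matrix.mul_apply, Jmat, Fintype.sum_sum_type, Matrix.one_apply, eq_comm]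

lemma Jmat_mul_diagBlock (a c : Matrix (Fin n) (Fin n) E) (l : E) :
    Jmat n E * diagBlock a l c = diagBlock c l a * Jmat n E := by
  funext i j
  cases i <;> cases j <;>
    simp [Matrix.mul_apply, Jmat, diagBlock, Fintype.sum_sum_type] <;>
    rename_i i j <;> (try cases i) <;> (try cases j) <;>
    simp [Matrix.mul_apply, Jmat, diagBlock, Fintype.sum_sum_type, eq_comm]

lemma Jmat_transpose : (Jmat n E)ᵀ = Jmat n E := by
  funext i j
  cases i <;> cases j <;>
    simp [Jmat, Matrix.transpose_apply] <;>
    rename_i i j <;> (try cases i) <;> (try cases j) <;>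
    simp [Jmat, eq_comm]

lemma Jmat_map (f : E → E) (h0 : f 0 = 0) (h1 : f 1 = 1) : (Jmat n E).map f = Jmat n E := by
  funext i j
  cases i <;> cases j <;>
    simp [Jmat, Matrix.map_apply, h0, h1] <;>
    rename_i i j <;> (try cases i) <;> (try cases j) <;>
    simp [Jmat, apply_ite f, h0, h1]


def unitOf (A B : Matrix (ι n) (ι n) E) (h : A * B = 1) : (Matrix (ι n) (ι n) E)ˣ :=
  ⟨A, B, h, mul_eq_one_comm.mp h⟩

@[simp] lemma unitOf_coe (A B : Matrix (ι n) (ι n) E) (h : A * B = 1) :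
    (unitOf A B h : Matrix (ι n) (ι n) E) = A := rfl

lemma memO_sigma {O : Subring E} {σ : E ≃+* E} (hσO : σ '' (O : Set E) = O)
    {x : E} (hx : x ∈ O) : σ x ∈ O := by
  have : σ x ∈ σ '' (O : Set E) := ⟨x, hx, rfl⟩
  rwa [hσO] at this

lemma sigma_two {σ : E ≃+* E} : σ (2 : E) = 2 := by
  have : σ (1+1 : E) = 1 + 1 := by rw [map_add, _root_.map_one]
  rw [show (2:E) = 1 + 1 by norm_num, this]

lemma coe_two (O : Subring E) : ((2 : ↥O) : E) = (2 : E) := map_ofNat O.subtype 2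

lemma exists_good_unit (O : Subring E) [IsDiscreteValuationRing ↥O]
    (h2 : IsUnit (2 : ↥O)) (σ : E ≃+* E) :
    ∃ u : E, u ∈ O ∧ u⁻¹ ∈ O ∧ u ≠ 0 ∧ u * σ u ≠ 1 := by
  by_contra hcon
  push_neg at hcon
  have helper : ∀ v : ↥O, IsUnit v → ((v : E)) * σ (v : E) = 1 := by
    intro v hv
    obtain ⟨w, hw1, hw2⟩ : ∃ w : ↥O, v * w = 1 ∧ w * v = 1 := by
      obtain ⟨u, hu⟩ := hv
      exact ⟨↑u⁻¹, by rw [← hu]; exact_mod_cast u.mul_inv, by rw [← hu]; exact_mod_cast u.inv_mul⟩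
    have hwE : (v : E) * (w : E) = 1 := by exact_mod_cast congrArg (Subtype.val) hw1
    have hvne : (v : E) ≠ 0 := left_ne_zero_of_mul_eq_one hwE
    have hvinv : (v : E)⁻¹ = (w : E) := eq_comm.mp (eq_inv_of_mul_eq_one_left (by rwa [mul_comm] at hwE))
    exact hcon _ v.2 (hvinv ▸ w.2) hvne
  obtain ⟨π, hπ⟩ := IsDiscreteValuationRing.exists_irreducible ↥O
  set p : E := (π : E) with hp
  have hpne : p ≠ 0 := by
    simpa [hp] using (Subtype.coe_injective.ne_iff.mpr hπ.ne_zero : (π : E) ≠ ((0 : ↥O) : E))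
  have h3 : (3 : E) = 0 := by
    have := helper 2 h2
    rw [coe_two, sigma_two] at this
    linear_combination this
  have hu1 : IsUnit (1 + π) := by
    rcases IsLocalRing.isUnit_or_isUnit_one_sub_self (-π) with h | h
    · exact absurd (by simpa using h.neg) hπ.not_isUnit
    · simpa [sub_neg_eq_add] using h
  obtain ⟨w2, hw2⟩ : ∃ w2 : ↥O, (2 : ↥O) * w2 = 1 := by
    obtain ⟨u, hu⟩ := h2
    exact ⟨↑u⁻¹, by rw [← hu]; exact_mod_cast u.mul_inv⟩
  have hu2 : IsUnit (2 + π) := by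
    have hsmall : IsUnit (1 + w2 * π) := by
      rcases IsLocalRing.isUnit_or_isUnit_one_sub_self (-(w2 * π)) with h | h
      · exfalso
        apply hπ.not_isUnit
        have h' : IsUnit (w2 * π) := by simpa using h.neg
        have := h2.mul h'
        rwa [show (2 : ↥O) * (w2 * π) = π by rw [← mul_assoc, hw2, one_mul]] at this
      · simpa [sub_neg_eq_add] using h
    have heq : (2 : ↥O) * (1 + w2 * π) = 2 + π := by
      rw [mul_add, mul_one, ← mul_assoc, hw2, one_mul]
    simpa [heq] using h2.mul hsmall
  have e1 : (1 + p) * (1 + σ p) = 1 := by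
    have := helper (1 + π) hu1
    push_cast at this
    rw [map_add, _root_.map_one] at this
    exact this
  have e2 : (2 + p) * (2 + σ p) = 1 := by
    have := helper (2 + π) hu2
    rw [show ((2 + π : ↥O) : E) = 2 + p by push_cast [coe_two]; ring] at this
    rw [map_add, sigma_two] at this
    exact this
  set q := σ p
  have hpq : p + q = 0 := by linear_combination e2 - e1 - h3
  have hp2 : p * p = 0 := by linear_combination p * hpq + hpq - e1
  exact hpne (mul_self_eq_zero.mp hp2)

end Aux

section Main
variable {n : ℕ} {E : Type*} [Field E] {O : Subring E} {σ : E ≃+* E}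

lemma mapσ_mul {m : Type*} [Fintype m] (A B : Matrix m m E) :
    (A * B).map ⇑σ = A.map ⇑σ * B.map ⇑σ := by
  have := Matrix.map_mul (L := A) (M := B) (f := (σ : E →+* E))
  simpa using this

lemma mapσ_one {m : Type*} [Fintype m] [DecidableEq m] :
    (1 : Matrix m m E).map ⇑σ = 1 :=
  Matrix.map_one _ (map_zero σ) (_root_.map_one σ)

lemma mapσ_mapσ (hσ2 : ∀ x, σ (σ x) = x) {m : Type*} (A : Matrix m m E) :
    (A.map ⇑σ).map ⇑σ = A := by
  funext i j; simp [Matrix.map_apply, hσ2]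

lemma mapσ_nonsing_inv (A : Matrix (Fin n) (Fin n) E) (hA : IsUnit A.det) :
    (A⁻¹).map ⇑σ = (A.map ⇑σ)⁻¹ := by
  symm
  apply Matrix.inv_eq_right_inv
  rw [← mapσ_mul, Matrix.mul_nonsing_inv _ hA, mapσ_one]

lemma mapσ_det (A : Matrix (Fin n) (Fin n) E) : (A.map ⇑σ).det = σ A.det := by
  have := RingHom.map_det (σ : E →+* E) A
  simpa using this.symm

lemma isUnit_mapσ_det {A : Matrix (Fin n) (Fin n) E} (hA : IsUnit A.det) :
    IsUnit (A.map ⇑σ).det := by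
  rw [mapσ_det, isUnit_iff_ne_zero]
  rw [isUnit_iff_ne_zero] at hA
  simpa using hA

lemma isUnit_mapσT_det {A : Matrix (Fin n) (Fin n) E} (hA : IsUnit A.det) :
    IsUnit ((A.map ⇑σ)ᵀ).det := by
  rw [Matrix.det_transpose]; exact isUnit_mapσ_det hA

lemma diagBlock_eq_one_iff {a c : Matrix (Fin n) (Fin n) E} {l : E} :
    diagBlock a l c = 1 ↔ a = 1 ∧ l = 1 ∧ c = 1 := by
  constructor
  · intro h
    rw [← diagBlock_one] at h
    exact ⟨diagBlock_inj₁ h, diagBlock_inj₂ h, diagBlock_inj₃ h⟩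
  · rintro ⟨rfl, rfl, rfl⟩; exact diagBlock_one

/-- The Gset condition for a block diagonal matrix. -/
lemma gset_diagBlock_iff (a c : Matrix (Fin n) (Fin n) E) (l : E) :
    ((diagBlock a l c).map ⇑σ)ᵀ * Jmat n E * diagBlock a l c = Jmat n E
      ↔ ((a.map ⇑σ)ᵀ * c = 1 ∧ σ l * l = 1 ∧ (c.map ⇑σ)ᵀ * a = 1) := by
  rw [diagBlock_map ⇑σ (map_zero σ), diagBlock_transpose, Matrix.mul_assoc,
    Jmat_mul_diagBlock, ← Matrix.mul_assoc, diagBlock_mul]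
  constructor
  · intro h
    have h1 : diagBlock ((a.map ⇑σ)ᵀ * c) (σ l * l) ((c.map ⇑σ)ᵀ * a) = 1 := by
      have := congrArg (fun X => X * Jmat n E) h
      simpa [Matrix.mul_assoc, Jmat_mul_Jmat] using this
    exact diagBlock_eq_one_iff.mp h1
  · rintro ⟨h1, h2, h3⟩
    rw [h1, h2, h3, diagBlock_one, one_mul]

lemma gset_mul {g h : (Matrix (ι n) (ι n) E)ˣ} (hg : g ∈ Gset n E σ) (hh : h ∈ Gset n E σ) :
    g * h ∈ Gset n E σ := by
  simp only [Gset, Set.mem_setOf_eq, Units.val_mul] at *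
  rw [mapσ_mul, Matrix.transpose_mul]
  calc ((h : Matrix (ι n) (ι n) E).map ⇑σ)ᵀ * ((g : Matrix (ι n) (ι n) E).map ⇑σ)ᵀ * Jmat n E *
        ((g : Matrix (ι n) (ι n) E) * (h : Matrix (ι n) (ι n) E))
      = ((h : Matrix (ι n) (ι n) E).map ⇑σ)ᵀ *
        (((g : Matrix (ι n) (ι n) E).map ⇑σ)ᵀ * Jmat n E * (g : Matrix (ι n) (ι n) E)) *
        (h : Matrix (ι n) (ι n) E) := by
        simp only [Matrix.mul_assoc]
    _ = Jmat n E := by rw [hg, hh]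

lemma lam_ne_zero {lam : E} (hl : lam * σ lam = 1) : lam ≠ 0 :=
  left_ne_zero_of_mul_eq_one hl

lemma P0mat_mul_inv (a : Matrix (Fin n) (Fin n) E) (lam : E) (ha : IsUnit a.det)
    (hl : lam ≠ 0) :
    diagBlock a lam ((a.map ⇑σ)ᵀ)⁻¹ * diagBlock a⁻¹ lam⁻¹ (a.map ⇑σ)ᵀ = 1 := by
  rw [diagBlock_mul, Matrix.mul_nonsing_inv _ ha, mul_inv_cancel₀ hl,
    Matrix.nonsing_inv_mul _ (isUnit_mapσT_det ha), diagBlock_one]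

/-- The unit of `P0`-shape attached to the data `(a, lam)`. -/
noncomputable def P0u (σ : E ≃+* E) (a : Matrix (Fin n) (Fin n) E) (lam : E)
    (ha : IsUnit a.det) (hl : lam ≠ 0) : (Matrix (ι n) (ι n) E)ˣ :=
  unitOf _ _ (P0mat_mul_inv (σ := σ) a lam ha hl)

@[simp] lemma P0u_coe (σ : E ≃+* E) (a : Matrix (Fin n) (Fin n) E) (lam : E)
    (ha : IsUnit a.det) (hl : lam ≠ 0) :
    (P0u σ a lam ha hl : Matrix (ι n) (ι n) E) = diagBlock a lam ((a.map ⇑σ)ᵀ)⁻¹ := rfl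

lemma mem_P0 (a : Matrix (Fin n) (Fin n) E) (lam : E)
    (h1 : ∀ i j, a i j ∈ O) (h2 : IsUnit a.det) (h3 : ∀ i j, a⁻¹ i j ∈ O)
    (h4 : lam ∈ O) (h5 : lam⁻¹ ∈ O) (h6 : lam * σ lam = 1) (hl : lam ≠ 0) :
    P0u σ a lam h2 hl ∈ P0set n E O σ :=
  ⟨a, lam, h1, h2, h3, h4, h5, h6, rfl⟩

lemma thirdBlock_mapσT (hσ2 : ∀ x, σ (σ x) = x) (a : Matrix (Fin n) (Fin n) E)
    (ha : IsUnit a.det) : ((((a.map ⇑σ)ᵀ)⁻¹).map ⇑σ)ᵀ = a⁻¹ :=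
  calc ((((a.map ⇑σ)ᵀ)⁻¹).map ⇑σ)ᵀ
      = ((((a.map ⇑σ)⁻¹)ᵀ).map ⇑σ)ᵀ := by rw [Matrix.transpose_nonsing_inv]
    _ = ((((a.map ⇑σ)⁻¹).map ⇑σ)ᵀ)ᵀ := by rw [Matrix.transpose_map]
    _ = ((a.map ⇑σ)⁻¹).map ⇑σ := Matrix.transpose_transpose _
    _ = ((a.map ⇑σ).map ⇑σ)⁻¹ := mapσ_nonsing_inv _ (isUnit_mapσ_det ha)
    _ = a⁻¹ := by rw [mapσ_mapσ hσ2]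

lemma P0_mul {p q : (Matrix (ι n) (ι n) E)ˣ}
    (hp : p ∈ P0set n E O σ) (hq : q ∈ P0set n E O σ) : p * q ∈ P0set n E O σ := by
  obtain ⟨a, al, ha1, ha2, ha3, ha4, ha5, ha6, ha7⟩ := hp
  obtain ⟨b, bl, hb1, hb2, hb3, hb4, hb5, hb6, hb7⟩ := hq
  refine ⟨a * b, al * bl, ?_, ?_, ?_, O.mul_mem ha4 hb4, ?_, ?_, ?_⟩
  · intro i j
    rw [Matrix.mul_apply]
    exact Subring.sum_mem _ fun k _ => O.mul_mem (ha1 i k) (hb1 k j)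
  · rw [Matrix.det_mul]; exact ha2.mul hb2
  · intro i j
    rw [Matrix.mul_inv_rev, Matrix.mul_apply]
    exact Subring.sum_mem _ fun k _ => O.mul_mem (hb3 i k) (ha3 k j)
  · rw [mul_inv]; exact O.mul_mem ha5 hb5
  · rw [_root_.map_mul]; linear_combination bl * σ bl * ha6 + hb6
  · rw [Units.val_mul, ha7, hb7, diagBlock_mul]
    congr 1
    rw [mapσ_mul, Matrix.transpose_mul, Matrix.mul_inv_rev]

lemma P0_inv {p : (Matrix (ι n) (ι n) E)ˣ} (hp : p ∈ P0set n E O σ) :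
    p⁻¹ ∈ P0set n E O σ := by
  obtain ⟨a, al, ha1, ha2, ha3, ha4, ha5, ha6, ha7⟩ := hp
  have hal : al ≠ 0 := lam_ne_zero ha6
  have hinv : ((p : (Matrix (ι n) (ι n) E)ˣ)⁻¹ : (Matrix (ι n) (ι n) E)ˣ).val
      = diagBlock a⁻¹ al⁻¹ (a.map ⇑σ)ᵀ := by
    rw [Matrix.coe_units_inv]
    apply Matrix.inv_eq_right_inv
    rw [ha7]
    exact P0mat_mul_inv a al ha2 hal
  refine ⟨a⁻¹, al⁻¹, ha3, ?_, ?_, ha5, by rw [inv_inv]; exact ha4, ?_, ?_⟩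
  · exact Matrix.isUnit_det_of_left_inverse (Matrix.mul_nonsing_inv _ ha2)
  · intro i j; rw [Matrix.nonsing_inv_nonsing_inv _ ha2]; exact ha1 i j
  · rw [map_inv₀, ← mul_inv, ha6, inv_one]
  · rw [hinv]
    congr 1
    rw [mapσ_nonsing_inv _ ha2, Matrix.transpose_nonsing_inv,
      Matrix.nonsing_inv_nonsing_inv _ (isUnit_mapσT_det ha2)]

lemma P0_gset (hσ2 : ∀ x, σ (σ x) = x) {p : (Matrix (ι n) (ι n) E)ˣ}
    (hp : p ∈ P0set n E O σ) : p ∈ Gset n E σ := by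
  obtain ⟨a, al, ha1, ha2, ha3, ha4, ha5, ha6, ha7⟩ := hp
  show _ = _
  rw [ha7]
  refine (gset_diagBlock_iff _ _ _).mpr ⟨?_, ?_, ?_⟩
  · exact Matrix.mul_nonsing_inv _ (isUnit_mapσT_det ha2)
  · rw [mul_comm]; exact ha6
  · rw [thirdBlock_mapσT hσ2 a ha2]
    exact Matrix.nonsing_inv_mul _ ha2

lemma smul_one_mul_smul_one (x y : E) :
    (x • (1 : Matrix (Fin n) (Fin n) E)) * (y • 1) = (x * y) • 1 := by
  rw [smul_mul_assoc, one_mul, smul_smul]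

lemma smul_one_mapσ (α : E) :
    ((α • (1 : Matrix (Fin n) (Fin n) E)).map ⇑σ) = σ α • 1 := by
  funext i j
  simp [Matrix.map_apply, Matrix.one_apply, apply_ite σ]

lemma sigma_ne_zero {α : E} (hα : α ≠ 0) : σ α ≠ 0 := fun h =>
  hα (by simpa using congrArg σ.symm h)

lemma ZL_gset (hσ2 : ∀ x, σ (σ x) = x) {z : (Matrix (ι n) (ι n) E)ˣ}
    (hz : z ∈ ZLset n E σ) : z ∈ Gset n E σ := by
  obtain ⟨α, lam, hα, hlam, hz7⟩ := hz
  show _ = _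
  rw [hz7]
  refine (gset_diagBlock_iff _ _ _).mpr ⟨?_, ?_, ?_⟩
  · rw [smul_one_mapσ, Matrix.transpose_smul, Matrix.transpose_one,
      smul_one_mul_smul_one, mul_inv_cancel₀ (sigma_ne_zero hα), one_smul]
  · rw [mul_comm]; exact hlam
  · rw [smul_one_mapσ, map_inv₀, hσ2, Matrix.transpose_smul, Matrix.transpose_one,
      smul_one_mul_smul_one, inv_mul_cancel₀ hα, one_smul]

/-- Central elements commute with block diagonal matrices. -/
lemma scalarBlock_comm (α l γ : E) (a c : Matrix (Fin n) (Fin n) E) (m : E) :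
    diagBlock (α • 1) l (γ • 1) * diagBlock a m c
      = diagBlock a m c * diagBlock (α • 1) l (γ • 1) := by
  rw [diagBlock_mul, diagBlock_mul, smul_mul_assoc, smul_mul_assoc, one_mul, one_mul,
    mul_smul_comm, mul_smul_comm, mul_one, mul_one, mul_comm l m]

/-- `J` as a unit. -/
noncomputable def JU : (Matrix (ι n) (ι n) E)ˣ :=
  unitOf (Jmat n E) (Jmat n E) (Jmat_mul_Jmat)

@[simp] lemma JU_coe : ((JU : (Matrix (ι n) (ι n) E)ˣ) : Matrix (ι n) (ι n) E) = Jmat n E := rfl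

lemma JU_mul_JU : (JU : (Matrix (ι n) (ι n) E)ˣ) * JU = 1 := by
  ext : 1
  rw [Units.val_mul, JU_coe, Jmat_mul_Jmat, Units.val_one]

lemma JU_inv : (JU : (Matrix (ι n) (ι n) E)ˣ)⁻¹ = JU :=
  inv_eq_of_mul_eq_one_right JU_mul_JU

lemma JU_gset : (JU : (Matrix (ι n) (ι n) E)ˣ) ∈ Gset n E σ := by
  show _ = _
  rw [JU_coe, Jmat_map ⇑σ (map_zero σ) (_root_.map_one σ), Jmat_transpose,
    Matrix.mul_assoc, Jmat_mul_Jmat, Matrix.mul_one]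

lemma J_conj_P0 (hσ2 : ∀ x, σ (σ x) = x) (hσO : σ '' (O : Set E) = O)
    {q : (Matrix (ι n) (ι n) E)ˣ} (hq : q ∈ P0set n E O σ) :
    JU * q * JU⁻¹ ∈ P0set n E O σ := by
  obtain ⟨a, al, ha1, ha2, ha3, ha4, ha5, ha6, ha7⟩ := hq
  set c : Matrix (Fin n) (Fin n) E := ((a.map ⇑σ)ᵀ)⁻¹ with hc
  have hcdet : IsUnit c.det :=
    Matrix.isUnit_det_of_right_inverse (Matrix.nonsing_inv_mul _ (isUnit_mapσT_det ha2))
  have hcoe : ((JU * q * JU⁻¹ : (Matrix (ι n) (ι n) E)ˣ) : Matrix (ι n) (ι n) E)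
      = diagBlock c al a := by
    rw [JU_inv, Units.val_mul, Units.val_mul, JU_coe, ha7, Matrix.mul_assoc,
      ← Matrix.mul_assoc (Jmat n E), Jmat_mul_diagBlock, Matrix.mul_assoc,
      Jmat_mul_Jmat, Matrix.mul_one]
  have hcform : c = ((a⁻¹).map ⇑σ)ᵀ := by
    rw [hc, mapσ_nonsing_inv _ ha2, Matrix.transpose_nonsing_inv]
  refine ⟨c, al, ?_, hcdet, ?_, ha4, ha5, ha6, ?_⟩
  · intro i j
    rw [hcform]
    exact memO_sigma hσO (ha3 j i)
  · intro i j
    rw [hc, Matrix.nonsing_inv_nonsing_inv _ (isUnit_mapσT_det ha2)]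
    exact memO_sigma hσO (ha1 j i)
  · rw [hcoe]
    congr 1
    rw [hc, thirdBlock_mapσT hσ2 a ha2, Matrix.nonsing_inv_nonsing_inv _ ha2]

lemma J_conj_P0_iff (hσ2 : ∀ x, σ (σ x) = x) (hσO : σ '' (O : Set E) = O)
    (q : (Matrix (ι n) (ι n) E)ˣ) :
    q ∈ P0set n E O σ ↔ JU * q * JU⁻¹ ∈ P0set n E O σ := by
  constructor
  · exact J_conj_P0 hσ2 hσO
  · intro h
    have := J_conj_P0 hσ2 hσO h
    have heq : JU * (JU * q * JU⁻¹) * JU⁻¹ = q := by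
      rw [JU_inv]
      calc JU * (JU * q * JU) * JU = (JU * JU) * q * (JU * JU) := by
            simp [mul_assoc]
        _ = q := by rw [JU_mul_JU, one_mul, mul_one]
    rwa [heq] at this

lemma smul_one_inv {x : E} (hx : x ≠ 0) :
    (x • (1 : Matrix (Fin n) (Fin n) E))⁻¹ = x⁻¹ • 1 :=
  Matrix.inv_eq_right_inv
    (by rw [smul_one_mul_smul_one, mul_inv_cancel₀ hx, one_smul])

lemma mapσ_smul (x : E) (A : Matrix (Fin n) (Fin n) E) :
    ((x • A).map ⇑σ) = σ x • A.map ⇑σ := by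
  funext i j
  simp [Matrix.map_apply, Matrix.smul_apply, _root_.map_mul]

lemma smul_inv_eq {x : E} (hx : x ≠ 0) {B : Matrix (Fin n) (Fin n) E}
    (hB : IsUnit B.det) : (x • B)⁻¹ = x⁻¹ • B⁻¹ :=
  Matrix.inv_eq_right_inv
    (by rw [smul_mul_smul_comm, mul_inv_cancel₀ hx, Matrix.mul_nonsing_inv _ hB, one_smul])

lemma diagBlock_inv {A C : Matrix (Fin n) (Fin n) E} {l : E}
    (hA : IsUnit A.det) (hC : IsUnit C.det) (hl : l ≠ 0) :
    (diagBlock A l C)⁻¹ = diagBlock A⁻¹ l⁻¹ C⁻¹ :=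
  Matrix.inv_eq_right_inv
    (by rw [diagBlock_mul, Matrix.mul_nonsing_inv _ hA, Matrix.mul_nonsing_inv _ hC,
      mul_inv_cancel₀ hl, diagBlock_one])

lemma J_conj_ZL (hσ2 : ∀ x, σ (σ x) = x)
    {z : (Matrix (ι n) (ι n) E)ˣ} (hz : z ∈ ZLset n E σ) :
    JU * z * JU⁻¹ ∈ ZLset n E σ := by
  obtain ⟨α, lam, hα, hlam, hz7⟩ := hz
  refine ⟨(σ α)⁻¹, lam, inv_ne_zero (sigma_ne_zero hα), hlam, ?_⟩
  rw [JU_inv, Units.val_mul, Units.val_mul, JU_coe, hz7, Matrix.mul_assoc,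
    ← Matrix.mul_assoc (Jmat n E), Jmat_mul_diagBlock, Matrix.mul_assoc,
    Jmat_mul_Jmat, Matrix.mul_one]
  rw [map_inv₀, hσ2, inv_inv]

lemma norm_mul {g h : (Matrix (ι n) (ι n) E)ˣ}
    (hg : ∀ q, q ∈ P0set n E O σ ↔ g * q * g⁻¹ ∈ P0set n E O σ)
    (hh : ∀ q, q ∈ P0set n E O σ ↔ h * q * h⁻¹ ∈ P0set n E O σ) :
    ∀ q, q ∈ P0set n E O σ ↔ (g * h) * q * (g * h)⁻¹ ∈ P0set n E O σ := by
  intro q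
  have heq : (g * h) * q * (g * h)⁻¹ = g * (h * q * h⁻¹) * g⁻¹ := by group
  rw [heq, ← hg, ← hh]

lemma norm_P0 {p : (Matrix (ι n) (ι n) E)ˣ} (hp : p ∈ P0set n E O σ) :
    ∀ q, q ∈ P0set n E O σ ↔ p * q * p⁻¹ ∈ P0set n E O σ := by
  intro q
  constructor
  · intro hq; exact P0_mul (P0_mul hp hq) (P0_inv hp)
  · intro hq
    have := P0_mul (P0_mul (P0_inv hp) hq) hp
    rwa [show p⁻¹ * (p * q * p⁻¹) * p = q by group] at this

lemma norm_ZL {z : (Matrix (ι n) (ι n) E)ˣ} (hz : z ∈ ZLset n E σ) :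
    ∀ q, q ∈ P0set n E O σ ↔ z * q * z⁻¹ ∈ P0set n E O σ := by
  have hcomm : ∀ q', q' ∈ P0set n E O σ → z * q' = q' * z := by
    intro q' hq'
    obtain ⟨α, lam, hα, hlam, hz7⟩ := hz
    obtain ⟨a, al, ha1, ha2, ha3, ha4, ha5, ha6, ha7⟩ := hq'
    ext : 1
    rw [Units.val_mul, Units.val_mul, hz7, ha7, scalarBlock_comm]
  intro q
  constructor
  · intro hq
    rwa [show z * q * z⁻¹ = q by rw [hcomm q hq]; group]
  · intro hq
    set r := z * q * z⁻¹ with hr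
    have h2 := hcomm r hq
    have h4 : q = z⁻¹ * (r * z) := by rw [hr]; group
    rw [h4, ← h2, show z⁻¹ * (z * r) = r by group]
    exact hq

/-- The elementary matrix `1 + e_{ij}`. -/
noncomputable def eMat (i j : Fin n) : Matrix (Fin n) (Fin n) E :=
  1 + Matrix.single i j (1 : E)

/-- Its inverse. -/
noncomputable def eInv (i j : Fin n) : Matrix (Fin n) (Fin n) E :=
  1 + Matrix.single i j (if i = j then -(2 : E)⁻¹ else -1)

lemma eMat_mul_eInv (h2 : (2 : E) ≠ 0) (i j : Fin n) :
    (eMat i j : Matrix (Fin n) (Fin n) E) * eInv i j = 1 := by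
  unfold eMat eInv
  rcases eq_or_ne i j with rfl | hij
  · rw [if_pos rfl]
    have e1 : Matrix.single i i (1:E) * Matrix.single i i (-(2:E)⁻¹)
        = Matrix.single i i (-(2:E)⁻¹) := by
      rw [Matrix.single_mul_single_same, one_mul]
    have e2 : Matrix.single i i (1:E) + (Matrix.single i i (-(2:E)⁻¹)
        + Matrix.single i i (-(2:E)⁻¹)) = 0 := by
      rw [← Matrix.single_add, ← Matrix.single_add,
        show (1:E) + (-(2:E)⁻¹ + -(2:E)⁻¹) = 0 by field_simp; ring]
      exact Matrix.single_zero i i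
    calc (1 + Matrix.single i i (1:E)) * (1 + Matrix.single i i (-(2:E)⁻¹))
        = 1 + (Matrix.single i i (1:E) + (Matrix.single i i (-(2:E)⁻¹)
          + Matrix.single i i (1:E) * Matrix.single i i (-(2:E)⁻¹))) := by
          noncomm_ring
      _ = 1 := by rw [e1, e2, add_zero]
  · rw [if_neg hij]
    have e1 : Matrix.single i j (1:E) * Matrix.single i j (-1 : E) = 0 :=
      Matrix.single_mul_single_of_ne 1 i j i (Ne.symm hij) _
    have e2 : Matrix.single i j (1:E) + (Matrix.single i j (-1 : E) + 0) = 0 := by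
      rw [add_zero, ← Matrix.single_add,
        show (1:E) + (-1 : E) = 0 by ring]
      exact Matrix.single_zero i j
    calc (1 + Matrix.single i j (1:E)) * (1 + Matrix.single i j (-1:E))
        = 1 + (Matrix.single i j (1:E) + (Matrix.single i j (-1:E)
          + Matrix.single i j (1:E) * Matrix.single i j (-1:E))) := by
          noncomm_ring
      _ = 1 := by rw [e1, e2, add_zero]

lemma eMat_entries (hO2 : (2 : E)⁻¹ ∈ O) (i j k l : Fin n) :
    (eMat i j : Matrix (Fin n) (Fin n) E) k l ∈ O ∧
    (eInv i j : Matrix (Fin n) (Fin n) E) k l ∈ O := by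
  constructor <;>
  · simp only [eMat, eInv, Matrix.add_apply, Matrix.single, Matrix.of_apply]
    apply O.add_mem
    · rw [Matrix.one_apply]; split_ifs; exacts [O.one_mem, O.zero_mem]
    · split_ifs <;>
        first
          | exact O.zero_mem
          | exact O.one_mem
          | exact O.neg_mem hO2
          | exact O.neg_mem O.one_mem

lemma eMat_det (h2 : (2 : E) ≠ 0) (i j : Fin n) :
    IsUnit (eMat i j : Matrix (Fin n) (Fin n) E).det :=
  Matrix.isUnit_det_of_right_inverse (eMat_mul_eInv h2 i j)

lemma eMat_inv (h2 : (2 : E) ≠ 0) (i j : Fin n) :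
    (eMat i j : Matrix (Fin n) (Fin n) E)⁻¹ = eInv i j :=
  Matrix.inv_eq_right_inv (eMat_mul_eInv h2 i j)

/-- A matrix commuting with all elementary matrices is scalar. -/
lemma scalar_of_comm (hn : 0 < n) (b : Matrix (Fin n) (Fin n) E)
    (hb : ∀ i j : Fin n, b * Matrix.single i j (1 : E)
        = Matrix.single i j (1 : E) * b) :
    b = b ⟨0, hn⟩ ⟨0, hn⟩ • 1 := by
  set i0 : Fin n := ⟨0, hn⟩
  funext k l
  rcases eq_or_ne k l with rfl | hkl
  · have h := congrFun (congrFun (hb k i0) k) i0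
    rw [Matrix.mul_single_apply_same, Matrix.single_mul_apply_same,
      mul_one, one_mul] at h
    simp [Matrix.smul_apply, Matrix.one_apply, h]
  · have h := congrFun (congrFun (hb l l) k) l
    rw [Matrix.mul_single_apply_same,
      Matrix.single_mul_apply_of_ne (h := hkl), mul_one] at h
    simp [Matrix.smul_apply, Matrix.one_apply, hkl, h]

lemma smul_one_entries {x : E} (hx : x ∈ O) (i j : Fin n) :
    (x • (1 : Matrix (Fin n) (Fin n) E)) i j ∈ O := by
  rw [Matrix.smul_apply, Matrix.one_apply, smul_eq_mul]
  split_ifs <;> simp only [mul_one, mul_zero] <;> [exact hx; exact O.zero_mem]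

lemma smul_one_det {x : E} (hn : 0 < n) (hx : x ≠ 0) :
    IsUnit (x • (1 : Matrix (Fin n) (Fin n) E)).det := by
  rw [Matrix.det_smul, Matrix.det_one, mul_one, isUnit_iff_ne_zero]
  exact pow_ne_zero _ hx

/-- The rescaling lemma: a matrix `A` whose elementary conjugates are integral is a
scalar multiple of a matrix in `GL_n(O)`. -/
lemma scaling [IsLocalRing ↥O] (hn : 0 < n) {A : Matrix (Fin n) (Fin n) E} (hA : IsUnit A.det)
    (hF : ∀ i j k l, A k i * A⁻¹ j l ∈ O) :
    ∃ (α : E) (a : Matrix (Fin n) (Fin n) E), α ≠ 0 ∧ (∀ i j, a i j ∈ O) ∧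
      IsUnit a.det ∧ (∀ i j, a⁻¹ i j ∈ O) ∧ A = α • a := by
  classical
  set i0 : Fin n := ⟨0, hn⟩
  have hsum : ∑ m, A i0 m * A⁻¹ m i0 = 1 := by
    have h1 := Matrix.mul_nonsing_inv A hA
    have := congrFun (congrFun h1 i0) i0
    simpa [Matrix.mul_apply, Matrix.one_apply] using this
  set T : Fin n → ↥O := fun m => ⟨A i0 m * A⁻¹ m i0, hF m m i0 i0⟩ with hT
  have hTsum : (∑ m, T m) = 1 := by
    apply Subtype.ext
    push_cast [hT]
    exact hsum
  have hTunit : ∃ m, IsUnit (T m) := by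
    by_contra hall
    push_neg at hall
    have hmem : (1 : ↥O) ∈ IsLocalRing.maximalIdeal ↥O := by
      rw [← hTsum]
      exact Ideal.sum_mem _ fun m _ => (IsLocalRing.mem_maximalIdeal _).mpr
        (mem_nonunits_iff.mpr (hall m))
    exact (mem_nonunits_iff.mp ((IsLocalRing.mem_maximalIdeal _).mp hmem)) isUnit_one
  obtain ⟨m0, hm0⟩ := hTunit
  obtain ⟨w, hw⟩ : ∃ w : ↥O, T m0 * w = 1 := by
    obtain ⟨u, hu⟩ := hm0
    exact ⟨↑u⁻¹, by rw [← hu]; exact_mod_cast u.mul_inv⟩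
  have hwE : (A i0 m0 * A⁻¹ m0 i0) * (w : E) = 1 := by
    have := congrArg (Subtype.val) hw
    push_cast [hT] at this
    exact this
  set α : E := A i0 m0 with hα
  have hα0 : α ≠ 0 := by
    intro h
    rw [h, zero_mul, zero_mul] at hwE
    exact zero_ne_one hwE
  have hαinv : α⁻¹ = A⁻¹ m0 i0 * (w : E) := by
    apply eq_comm.mp
    apply eq_inv_of_mul_eq_one_right
    rw [← mul_assoc]
    exact hwE
  refine ⟨α, α⁻¹ • A, hα0, ?_, ?_, ?_, by rw [smul_smul, mul_inv_cancel₀ hα0, one_smul]⟩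
  · intro k l
    rw [Matrix.smul_apply, smul_eq_mul, hαinv]
    have : A⁻¹ m0 i0 * (w : E) * A k l = (A k l * A⁻¹ m0 i0) * (w : E) := by ring
    rw [this]
    exact O.mul_mem (hF l m0 k i0) w.2
  · rw [Matrix.det_smul, isUnit_iff_ne_zero]
    exact mul_ne_zero (pow_ne_zero _ (inv_ne_zero hα0)) hA.ne_zero
  · intro k l
    have hi : (α⁻¹ • A)⁻¹ = α • A⁻¹ := by
      rw [smul_inv_eq (inv_ne_zero hα0) hA, inv_inv]
    rw [hi, Matrix.smul_apply, smul_eq_mul, hα]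
    exact hF m0 k i0 l

/-- The scalar block-diagonal matrix as `Matrix.diagonal`. -/
lemma diagBlock_diagonal (x y z : E) :
    diagBlock (x • (1 : Matrix (Fin n) (Fin n) E)) y (z • 1)
      = Matrix.diagonal (Sum.elim (fun _ : Fin n => x)
          (Sum.elim (fun _ : Unit => y) (fun _ : Fin n => z))) := by
  funext i j
  rcases i with i | i | i <;> rcases j with j | j | j <;>
    simp [diagBlock, Matrix.diagonal_apply, Matrix.smul_apply, Matrix.one_apply,
      mul_ite, mul_one, mul_zero] <;>
    split_ifs <;> simp_all

lemma sB_conj_entry (P Q : Matrix (Fin n) (Fin n) E) (i j k l : Fin n) :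
    (P * Matrix.single i j (1 : E) * Q) k l = P k i * Q j l := by
  rw [Matrix.mul_apply]
  rw [Finset.sum_eq_single j]
  · rw [Matrix.mul_single_apply_same, mul_one]
  · intro m _ hm
    rw [Matrix.mul_single_apply_of_ne (hbj := hm), zero_mul]
  · intro hj; exact absurd (Finset.mem_univ j) hj

/-- The core lemma: an element of the normalizer commuting with the regular scalar
block element is in `P0 * ZL`. -/
lemma core [IsLocalRing ↥O] (hn : 0 < n) (hσ2 : ∀ x, σ (σ x) = x)
    (h2O : (2 : E)⁻¹ ∈ O) (h2E : (2 : E) ≠ 0)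
    {u : E} (hu1 : u ≠ 1) (huσ1 : (σ u)⁻¹ ≠ 1) (huu : u ≠ (σ u)⁻¹)
    {g : (Matrix (ι n) (ι n) E)ˣ} (hg : g ∈ Gset n E σ)
    (hN : ∀ h, h ∈ P0set n E O σ ↔ g * h * g⁻¹ ∈ P0set n E O σ)
    (hcomm : (g : Matrix (ι n) (ι n) E) * diagBlock (u • 1) 1 ((σ u)⁻¹ • 1)
        = diagBlock (u • 1) 1 ((σ u)⁻¹ • 1) * (g : Matrix (ι n) (ι n) E)) :
    g ∈ P0set n E O σ * ZLset n E σ := by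
  classical
  set G : Matrix (ι n) (ι n) E := (g : Matrix (ι n) (ι n) E) with hGdef
  set d : ι n → E := Sum.elim (fun _ : Fin n => u)
    (Sum.elim (fun _ : Unit => (1 : E)) (fun _ : Fin n => (σ u)⁻¹)) with hd
  have hent : ∀ x y, G x y * d y = d x * G x y := by
    intro x y
    have h1 := congrFun (congrFun hcomm x) y
    rwa [diagBlock_diagonal, Matrix.mul_diagonal, Matrix.diagonal_mul] at h1
  -- G is block diagonal
  set A : Matrix (Fin n) (Fin n) E := fun i j => G (Sum.inl i) (Sum.inl j) with hA
  set lam : E := G (Sum.inr (Sum.inl ())) (Sum.inr (Sum.inl ())) with hlam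
  set C : Matrix (Fin n) (Fin n) E :=
    fun i j => G (Sum.inr (Sum.inr i)) (Sum.inr (Sum.inr j)) with hC
  have hzero : ∀ x y, d x ≠ d y → G x y = 0 := by
    intro x y hxy
    have h1 := hent x y
    have h2 : (d y - d x) * G x y = 0 := by linear_combination h1
    rcases mul_eq_zero.mp h2 with h3 | h3
    · exact absurd (sub_eq_zero.mp h3).symm hxy
    · exact h3
  have hGdiag : G = diagBlock A lam C := by
    funext x y
    cases x with
    | inl i =>
      cases y with
      | inl j => rfl
      | inr j =>
        cases j with
        | inl j => exact hzero _ _ (fun h => hu1 h)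
        | inr j => exact hzero _ _ (fun h => huu h)
    | inr i =>
      cases i with
      | inl i =>
        cases y with
        | inl j => exact hzero _ _ (fun h => hu1 h.symm)
        | inr j =>
          cases j with
          | inl j => cases i; cases j; rfl
          | inr j => exact hzero _ _ (fun h => huσ1 h.symm)
      | inr i =>
        cases y with
        | inl j => exact hzero _ _ (fun h => huu h.symm)
        | inr j =>
          cases j with
          | inl j => exact hzero _ _ (fun h => huσ1 h)
          | inr j => rfl
  -- relations from the unitary condition
  have hgset : (G.map ⇑σ)ᵀ * Jmat n E * G = Jmat n E := hg
  rw [hGdiag] at hgset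
  obtain ⟨hAC, hσl, hCA⟩ := (gset_diagBlock_iff A C lam).mp hgset
  have hAdet : IsUnit A.det := Matrix.isUnit_det_of_left_inverse hCA
  have hCdet : IsUnit C.det := Matrix.isUnit_det_of_left_inverse hAC
  have hCval : C = ((A.map ⇑σ)ᵀ)⁻¹ := (Matrix.inv_eq_right_inv hAC).symm
  have hlam0 : lam ≠ 0 := by
    intro h; rw [h, mul_zero] at hσl; exact zero_ne_one hσl
  have hlamnorm : lam * σ lam = 1 := by rw [mul_comm]; exact hσl
  have hB : ((g⁻¹ : (Matrix (ι n) (ι n) E)ˣ) : Matrix (ι n) (ι n) E)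
      = diagBlock A⁻¹ lam⁻¹ C⁻¹ := by
    rw [Matrix.coe_units_inv, ← hGdef, hGdiag, diagBlock_inv hAdet hCdet hlam0]
  have hF : ∀ i j k l, A k i * A⁻¹ j l ∈ O := by
    intro i j k l
    have hq := mem_P0 (O := O) (σ := σ) (eMat i j) 1
      (fun k l => (eMat_entries h2O i j k l).1) (eMat_det h2E i j)
      (fun k l => by rw [eMat_inv h2E]; exact (eMat_entries h2O i j k l).2)
      O.one_mem (by rw [inv_one]; exact O.one_mem)
      (by rw [_root_.map_one, one_mul]) one_ne_zero
    obtain ⟨b', l', hb1', hb2', hb3', hb4', hb5', hb6', hb7'⟩ := (hN _).mp hq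
    have hcoe : ((g * P0u σ (eMat i j) 1 (eMat_det h2E i j) one_ne_zero * g⁻¹ :
          (Matrix (ι n) (ι n) E)ˣ) : Matrix (ι n) (ι n) E)
        = diagBlock (A * eMat i j * A⁻¹) (lam * 1 * lam⁻¹)
            (C * ((((eMat i j).map ⇑σ)ᵀ)⁻¹) * C⁻¹) := by
      rw [Units.val_mul, Units.val_mul, hB, ← hGdef, hGdiag, P0u_coe,
        diagBlock_mul, diagBlock_mul]
    rw [hcoe] at hb7'
    have hb'eq : b' = A * eMat i j * A⁻¹ := (diagBlock_inj₁ hb7').symm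
    have hexp : A * eMat i j * A⁻¹ = 1 + A * Matrix.single i j (1:E) * A⁻¹ := by
      unfold eMat
      rw [mul_add, mul_one, add_mul, Matrix.mul_nonsing_inv _ hAdet]
    have h5 : A k i * A⁻¹ j l = b' k l - (1 : Matrix (Fin n) (Fin n) E) k l := by
      rw [hb'eq, hexp, Matrix.add_apply, sB_conj_entry]
      ring
    rw [h5]
    refine O.sub_mem (hb1' k l) ?_
    rw [Matrix.one_apply]; split_ifs; exacts [O.one_mem, O.zero_mem]
  obtain ⟨α, a, hα0, ha1, ha2, ha3, hAeq⟩ := scaling hn hAdet hF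
  have hp := mem_P0 (O := O) (σ := σ) a 1 ha1 ha2 ha3 O.one_mem
    (by rw [inv_one]; exact O.one_mem) (by rw [_root_.map_one, one_mul]) one_ne_zero
  set z : (Matrix (ι n) (ι n) E)ˣ := unitOf
    (diagBlock (α • 1) lam ((σ α)⁻¹ • 1)) (diagBlock (α⁻¹ • 1) lam⁻¹ (σ α • 1))
    (by rw [diagBlock_mul, smul_one_mul_smul_one, smul_one_mul_smul_one,
      mul_inv_cancel₀ hα0, mul_inv_cancel₀ hlam0, inv_mul_cancel₀ (sigma_ne_zero hα0),
      one_smul, diagBlock_one]) with hzdef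
  have hz : z ∈ ZLset n E σ := ⟨α, lam, hα0, hlamnorm, rfl⟩
  have c1 : a * (α • (1 : Matrix (Fin n) (Fin n) E)) = A := by
    rw [mul_smul_comm, mul_one]; exact hAeq.symm
  have c3 : ((a.map ⇑σ)ᵀ)⁻¹ * ((σ α)⁻¹ • (1 : Matrix (Fin n) (Fin n) E)) = C := by
    rw [mul_smul_comm, mul_one, hCval, hAeq, mapσ_smul, Matrix.transpose_smul,
      smul_inv_eq (sigma_ne_zero hα0) (isUnit_mapσT_det ha2)]
  have hgeq : g = P0u σ a 1 ha2 one_ne_zero * z := by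
    ext : 1
    rw [Units.val_mul, P0u_coe, hzdef, unitOf_coe, diagBlock_mul, c1, c3, one_mul]
    exact hGdiag
  rw [hgeq]
  exact Set.mul_mem_mul hp hz

end Main

/-- Let `O` be a discrete valuation ring with fraction field `E`, in which `2` is a
unit, and `σ` an involutive ring automorphism of `E`, `σ ≠ id`, with `σ(O) = O`.
Then the normalizer of `𝔓₀` in `G = U(n,n+1)` is `(𝔓₀·Z(L)) ∪ (𝔓₀·Z(L))·J`; moreover
`J² = 1` and `J ∉ 𝔓₀·Z(L)`, so the normalizer is the internal semidirect product
`(𝔓₀·Z(L)) ⋊ ⟨J⟩`. -/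
theorem normalizer_P0 (hn : 0 < n) (O : Subring E) [IsDiscreteValuationRing ↥O]
    [IsFractionRing ↥O E] (h2 : IsUnit (2 : ↥O))
    (σ : E ≃+* E) (hσ : σ ≠ RingEquiv.refl E) (hσ2 : ∀ x, σ (σ x) = x)
    (hσO : σ '' (O : Set E) = O) :
    ({g ∈ Gset n E σ | ∀ h, h ∈ P0set n E O σ ↔ g * h * g⁻¹ ∈ P0set n E O σ}
        = (P0set n E O σ * ZLset n E σ) ∪
          {g : (Matrix (ι n) (ι n) E)ˣ | ∃ h ∈ P0set n E O σ * ZLset n E σ,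
            (g : Matrix (ι n) (ι n) E) = (h : Matrix (ι n) (ι n) E) * Jmat n E}) ∧
    Jmat n E * Jmat n E = 1 ∧
    ¬ ∃ h ∈ P0set n E O σ * ZLset n E σ, (h : Matrix (ι n) (ι n) E) = Jmat n E := by
  classical
  set i0 : Fin n := ⟨0, hn⟩
  -- facts about 2
  obtain ⟨w2, hw2⟩ : ∃ w2 : ↥O, (2 : ↥O) * w2 = 1 := by
    obtain ⟨v, hv⟩ := h2
    exact ⟨↑v⁻¹, by rw [← hv]; exact_mod_cast v.mul_inv⟩
  have hw2E : (2 : E) * (w2 : E) = 1 := by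
    have := congrArg (Subtype.val) hw2
    push_cast [coe_two] at this
    exact this
  have h2e : (2 : E) ≠ 0 := left_ne_zero_of_mul_eq_one hw2E
  have h2O : (2 : E)⁻¹ ∈ O := by
    have : (2 : E)⁻¹ = (w2 : E) :=
      eq_comm.mp (eq_inv_of_mul_eq_one_left (by rwa [mul_comm] at hw2E))
    rw [this]; exact w2.2
  -- the good unit u
  obtain ⟨u, huO, huIO, hu0, hun⟩ := exists_good_unit O h2 σ
  have hu1 : u ≠ 1 := by
    intro h; exact hun (by rw [h, _root_.map_one, one_mul])
  have huσ1 : (σ u)⁻¹ ≠ 1 := by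
    intro h
    have h1 : σ u = 1 := by rwa [inv_eq_one] at h
    have h2' : u = 1 := by
      have := congrArg σ h1
      rwa [hσ2, _root_.map_one] at this
    exact hu1 h2'
  have hσu0 : σ u ≠ 0 := sigma_ne_zero hu0
  have huu : u ≠ (σ u)⁻¹ := by
    intro h
    apply hun
    nth_rewrite 1 [h]
    exact inv_mul_cancel₀ hσu0
  -- the special unit su
  have hsudet : IsUnit (u • (1 : Matrix (Fin n) (Fin n) E)).det := smul_one_det hn hu0
  set squ : (Matrix (ι n) (ι n) E)ˣ := P0u σ (u • 1) 1 hsudet one_ne_zero with hsqu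
  have hthird : (((u • (1 : Matrix (Fin n) (Fin n) E)).map ⇑σ)ᵀ)⁻¹
      = (σ u)⁻¹ • 1 := by
    rw [smul_one_mapσ, Matrix.transpose_smul, Matrix.transpose_one, smul_one_inv hσu0]
  have hsucoe : (squ : Matrix (ι n) (ι n) E) = diagBlock (u • 1) 1 ((σ u)⁻¹ • 1) := by
    rw [hsqu, P0u_coe, hthird]
  have hsumem : squ ∈ P0set n E O σ := by
    rw [hsqu]
    exact mem_P0 (u • 1) 1 (smul_one_entries huO) hsudet
      (fun i j => by rw [smul_one_inv hu0]; exact smul_one_entries huIO i j)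
      O.one_mem (by rw [inv_one]; exact O.one_mem) (by rw [_root_.map_one, one_mul])
      one_ne_zero
  refine ⟨?_, Jmat_mul_Jmat, ?_⟩
  swap
  · -- J is not in P0 * ZL
    rintro ⟨h, hh, hcoe⟩
    rw [Set.mem_mul] at hh
    obtain ⟨p, hp, z, hz, rfl⟩ := hh
    obtain ⟨a, al, _, _, _, _, _, _, hp7⟩ := hp
    obtain ⟨α, lam, _, _, hz7⟩ := hz
    have h1 : ((p * z : (Matrix (ι n) (ι n) E)ˣ) : Matrix (ι n) (ι n) E)
        (Sum.inl i0) (Sum.inr (Sum.inr i0)) = 0 := by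
      rw [Units.val_mul, hp7, hz7, diagBlock_mul]
      rfl
    rw [hcoe] at h1
    have h2' : Jmat n E (Sum.inl i0) (Sum.inr (Sum.inr i0)) = 1 := by
      simp [Jmat]
    rw [h2'] at h1
    exact one_ne_zero h1
  · -- the set equality
    ext g
    simp only [Set.mem_sep_iff, Set.mem_setOf_eq, Set.mem_union]
    constructor
    · rintro ⟨hg, hN⟩
      -- conjugate of squ
      obtain ⟨b, μ, hb1, hb2, hb3, hb4, hb5, hb6, hb7⟩ := (hN squ).mp hsumem
      -- it commutes with everything in P0
      have hZ : ∀ q, q ∈ P0set n E O σ → (g * squ * g⁻¹) * q = q * (g * squ * g⁻¹) := by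
        intro q hq
        obtain ⟨h', hq', hh'P⟩ : ∃ h', q = g * h' * g⁻¹ ∧ h' ∈ P0set n E O σ := by
          refine ⟨g⁻¹ * q * g, by group, ?_⟩
          rw [hN (g⁻¹ * q * g), show g * (g⁻¹ * q * g) * g⁻¹ = q by group]
          exact hq
        obtain ⟨a', l', _, _, _, _, _, _, ha7'⟩ := hh'P
        have hcu : squ * h' = h' * squ := by
          ext : 1
          rw [Units.val_mul, Units.val_mul, hsucoe, ha7', scalarBlock_comm]
        calc (g * squ * g⁻¹) * q = g * (squ * h') * g⁻¹ := by rw [hq']; group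
          _ = g * (h' * squ) * g⁻¹ := by rw [hcu]
          _ = q * (g * squ * g⁻¹) := by rw [hq']; group
      -- b is scalar
      have hbcomm : ∀ i j : Fin n, b * Matrix.single i j (1 : E)
          = Matrix.single i j 1 * b := by
        intro i j
        have hq := mem_P0 (O := O) (σ := σ) (eMat i j) 1
          (fun k l => (eMat_entries h2O i j k l).1) (eMat_det h2e i j)
          (fun k l => by rw [eMat_inv h2e]; exact (eMat_entries h2O i j k l).2)
          O.one_mem (by rw [inv_one]; exact O.one_mem)
          (by rw [_root_.map_one, one_mul]) one_ne_zero
        have h9 : diagBlock b μ ((b.map ⇑σ)ᵀ)⁻¹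
              * (P0u σ (eMat i j) 1 (eMat_det h2e i j) one_ne_zero :
                  Matrix (ι n) (ι n) E)
            = (P0u σ (eMat i j) 1 (eMat_det h2e i j) one_ne_zero :
                  Matrix (ι n) (ι n) E) * diagBlock b μ ((b.map ⇑σ)ᵀ)⁻¹ := by
          rw [← hb7, ← Units.val_mul, ← Units.val_mul, hZ _ hq]
        rw [P0u_coe, diagBlock_mul, diagBlock_mul] at h9
        have h11 := diagBlock_inj₁ h9
        unfold eMat at h11
        rw [mul_add, mul_one, add_mul, one_mul] at h11
        exact add_left_cancel h11
      have hbs : b = b i0 i0 • 1 := scalar_of_comm hn b hbcomm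
      set β : E := b i0 i0 with hβ
      have hβ0 : β ≠ 0 := by
        intro h
        rw [hbs, h, zero_smul] at hb2
        rw [haveI : Nonempty (Fin n) := ⟨i0⟩; Matrix.det_zero] at hb2
        exact not_isUnit_zero hb2
      have hb7' : ((g * squ * g⁻¹ : (Matrix (ι n) (ι n) E)ˣ) : Matrix (ι n) (ι n) E)
          = diagBlock (β • 1) μ ((σ β)⁻¹ • 1) := by
        rw [hb7, hbs]
        congr 1
        rw [smul_one_mapσ, Matrix.transpose_smul, Matrix.transpose_one,
          smul_one_inv (sigma_ne_zero hβ0)]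
      -- row nonvanishing and eigenvalue matching
      set G : Matrix (ι n) (ι n) E := (g : Matrix (ι n) (ι n) E) with hGdef
      have hrow : ∀ x : ι n, ∃ y, G x y ≠ 0 := by
        intro x
        have hGB : G * ((g⁻¹ : (Matrix (ι n) (ι n) E)ˣ) : Matrix (ι n) (ι n) E) = 1 := by
          rw [hGdef, ← Units.val_mul, mul_inv_cancel, Units.val_one]
        have h1 := congrFun (congrFun hGB x) x
        rw [Matrix.mul_apply, Matrix.one_apply_eq] at h1
        by_contra hall
        push_neg at hall
        rw [Finset.sum_eq_zero (fun y _ => by rw [hall y, zero_mul])] at h1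
        exact zero_ne_one h1
      set d : ι n → E := Sum.elim (fun _ : Fin n => u)
        (Sum.elim (fun _ : Unit => (1 : E)) (fun _ : Fin n => (σ u)⁻¹)) with hd
      set d' : ι n → E := Sum.elim (fun _ : Fin n => β)
        (Sum.elim (fun _ : Unit => μ) (fun _ : Fin n => (σ β)⁻¹)) with hd'
      have hmatcomm : G * diagBlock (u • 1) 1 ((σ u)⁻¹ • 1)
          = diagBlock (β • 1) μ ((σ β)⁻¹ • 1) * G := by
        have h1 : g * squ = (g * squ * g⁻¹) * g := by group
        have h2' := congrArg Units.val h1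
        rw [Units.val_mul, Units.val_mul, hsucoe, hb7'] at h2'
        exact h2'
      have hent : ∀ x y, G x y * d y = d' x * G x y := by
        intro x y
        have h1 := congrFun (congrFun hmatcomm x) y
        rwa [diagBlock_diagonal, diagBlock_diagonal, Matrix.mul_diagonal,
          Matrix.diagonal_mul] at h1
      have hval : ∀ x : ι n, ∃ y, d' x = d y := by
        intro x
        obtain ⟨y, hy⟩ := hrow x
        refine ⟨y, ?_⟩
        have h1 := hent x y
        have h2' : (d y - d' x) * G x y = 0 := by linear_combination h1
        rcases mul_eq_zero.mp h2' with h3 | h3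
        · exact (sub_eq_zero.mp h3).symm
        · exact absurd h3 hy
      -- μ = 1
      have hμ : μ = 1 := by
        obtain ⟨y, hy⟩ := hval (Sum.inr (Sum.inl ()))
        rcases y with y | y | y
        · exfalso
          have : μ = u := hy
          rw [this] at hb6
          exact hun hb6
        · exact hy
        · exfalso
          have h4 : μ = (σ u)⁻¹ := hy
          rw [h4, map_inv₀, hσ2] at hb6
          have : (u * σ u)⁻¹ = 1 := by rw [mul_inv]; linear_combination hb6
          exact hun (by rwa [inv_eq_one] at this)
      rcases hval (Sum.inl i0) with ⟨y, hy⟩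
      rcases y with y | y | y
      · -- β = u : g commutes with squ
        have hβu : β = u := hy
        have hcommg : G * diagBlock (u • 1) 1 ((σ u)⁻¹ • 1)
            = diagBlock (u • 1) 1 ((σ u)⁻¹ • 1) * G := by
          rw [hβu, hμ] at hmatcomm
          exact hmatcomm
        exact Or.inl (core hn hσ2 h2O h2e hu1 huσ1 huu hg hN hcommg)
      · -- β = 1 : impossible
        exfalso
        have hβ1 : β = 1 := hy
        have hσβ : (σ β)⁻¹ = 1 := by rw [hβ1, _root_.map_one, inv_one]
        have hseq : g * squ * g⁻¹ = 1 := by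
          ext : 1
          rw [hb7', hσβ, hβ1, hμ, one_smul, diagBlock_one, Units.val_one]
        have hsq1 : squ = 1 := by
          have h1 : squ = g⁻¹ * (g * squ * g⁻¹) * g := by group
          rw [hseq] at h1
          simpa using h1
        have h2' := congrArg Units.val hsq1
        rw [hsucoe, Units.val_one] at h2'
        have h3 := congrFun (congrFun h2' (Sum.inl i0)) (Sum.inl i0)
        have h4 : (diagBlock (u • (1 : Matrix (Fin n) (Fin n) E)) 1 ((σ u)⁻¹ • 1))
            (Sum.inl i0) (Sum.inl i0) = u := by
          show (u • (1 : Matrix (Fin n) (Fin n) E)) i0 i0 = u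
          rw [Matrix.smul_apply, Matrix.one_apply_eq, smul_eq_mul, mul_one]
        rw [h4, Matrix.one_apply_eq] at h3
        exact hu1 h3
      · -- β = (σ u)⁻¹ : the J-swapped case
        have hβσ : β = (σ u)⁻¹ := hy
        have hσβ : (σ β)⁻¹ = u := by rw [hβσ, map_inv₀, hσ2, inv_inv]
        have hseq : g * squ * g⁻¹ = JU * squ * JU := by
          ext : 1
          rw [hb7', hσβ, hβσ, hμ, Units.val_mul, Units.val_mul, JU_coe, hsucoe,
            Jmat_mul_diagBlock, Matrix.mul_assoc, Jmat_mul_Jmat, Matrix.mul_one]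
        obtain ⟨g2, hg2def⟩ : ∃ g2 : (Matrix (ι n) (ι n) E)ˣ, g2 = JU * g := ⟨_, rfl⟩
        have hg2 : g2 ∈ Gset n E σ := hg2def ▸ gset_mul JU_gset hg
        have hN2 : ∀ q, q ∈ P0set n E O σ ↔ g2 * q * g2⁻¹ ∈ P0set n E O σ :=
          hg2def ▸ norm_mul (J_conj_P0_iff hσ2 hσO) hN
        have he2 : g2 * squ * g2⁻¹ = squ := by
          rw [hg2def]
          have h1 : (JU * g) * squ * (JU * g)⁻¹ = JU * (g * squ * g⁻¹) * JU⁻¹ := by group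
          rw [h1, hseq, JU_inv]
          have h2' : JU * (JU * squ * JU) * JU = (JU * JU) * squ * (JU * JU) := by group
          rw [h2', JU_mul_JU, one_mul, mul_one]
        have hcomm2 : g2 * squ = squ * g2 := by
          conv_rhs => rw [← he2]
          group
        have hcomm2m : (g2 : Matrix (ι n) (ι n) E) * diagBlock (u • 1) 1 ((σ u)⁻¹ • 1)
            = diagBlock (u • 1) 1 ((σ u)⁻¹ • 1) * (g2 : Matrix (ι n) (ι n) E) := by
          have := congrArg Units.val hcomm2
          rwa [Units.val_mul, Units.val_mul, hsucoe] at this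
        have hmem2 : g2 ∈ P0set n E O σ * ZLset n E σ :=
          core hn hσ2 h2O h2e hu1 huσ1 huu hg2 hN2 hcomm2m
        refine Or.inr ⟨g * JU, ?_, ?_⟩
        · have hrel : g * JU = JU * g2 * JU⁻¹ := by
            rw [hg2def, JU_inv]
            have h1 : JU * (JU * g) * JU = (JU * JU) * (g * JU) := by group
            rw [h1, JU_mul_JU, one_mul]
          rw [Set.mem_mul] at hmem2
          obtain ⟨p, hp, z, hz, hpz⟩ := hmem2
          have hrel2 : g * JU = (JU * p * JU⁻¹) * (JU * z * JU⁻¹) := by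
            rw [hrel, ← hpz]
            group
          rw [hrel2]
          exact Set.mul_mem_mul (J_conj_P0 hσ2 hσO hp) (J_conj_ZL hσ2 hz)
        · rw [Units.val_mul, JU_coe, Matrix.mul_assoc, Jmat_mul_Jmat, Matrix.mul_one]
    · rintro (hmem | ⟨h, hh, hcoe⟩)
      · rw [Set.mem_mul] at hmem
        obtain ⟨p, hp, z, hz, rfl⟩ := hmem
        exact ⟨gset_mul (P0_gset hσ2 hp) (ZL_gset hσ2 hz),
          norm_mul (norm_P0 hp) (norm_ZL hz)⟩
      · have hgeq : g = h * JU := by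
          ext : 1
          rw [Units.val_mul, JU_coe]
          exact hcoe
        rw [Set.mem_mul] at hh
        obtain ⟨p, hp, z, hz, rfl⟩ := hh
        rw [hgeq]
        exact ⟨gset_mul (gset_mul (P0_gset hσ2 hp) (ZL_gset hσ2 hz)) JU_gset,
          norm_mul (norm_mul (norm_P0 hp) (norm_ZL hz)) (J_conj_P0_iff hσ2 hσO)⟩


end Stmt0
end

section
/- Let O be a discrete valuation ring with fraction field K, let K₀ = GL_n(O) be the subgroup of GL_n(K) consisting of matrices with entries in O whose inverse also has entries in O, and let Z = {λ·Id_n : λ ∈ K^×} be the subgroup of scalar matrices. Then the normalizer of K₀ in GL_n(K) equals K₀·Z. -/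
open scoped Pointwise

namespace Stmt1

variable {K : Type*} [Field K]

/-- `GL_n(O)` inside `GL_n(K)`: invertible matrices whose entries, together with the
entries of the inverse, lie in the subring `O`. -/
def K0set (O : Subring K) (n : ℕ) : Set (Matrix (Fin n) (Fin n) K)ˣ :=
  {g | (∀ i j, (g : Matrix (Fin n) (Fin n) K) i j ∈ O) ∧
    (∀ i j, ((g⁻¹ : (Matrix (Fin n) (Fin n) K)ˣ) : Matrix (Fin n) (Fin n) K) i j ∈ O)}

/-- The group of invertible scalar matrices `λ · Id_n`, `λ ∈ K^×`. -/
def Zset (K : Type*) [Field K] (n : ℕ) : Set (Matrix (Fin n) (Fin n) K)ˣ :=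
  {g | ∃ lam : K, lam ≠ 0 ∧ (g : Matrix (Fin n) (Fin n) K) = lam • (1 : Matrix (Fin n) (Fin n) K)}

lemma mul_mem_K0set {O : Subring K} {n : ℕ} {a b : (Matrix (Fin n) (Fin n) K)ˣ}
    (ha : a ∈ K0set O n) (hb : b ∈ K0set O n) : a * b ∈ K0set O n := by
  constructor
  · intro i j
    show (a.val * b.val) i j ∈ O
    rw [Matrix.mul_apply]
    exact Subring.sum_mem _ fun m _ => O.mul_mem (ha.1 i m) (hb.1 m j)
  · intro i j
    rw [mul_inv_rev]
    show ((b⁻¹).val * (a⁻¹).val) i j ∈ O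
    rw [Matrix.mul_apply]
    exact Subring.sum_mem _ fun m _ => O.mul_mem (hb.2 i m) (ha.2 m j)

lemma inv_mem_K0set {O : Subring K} {n : ℕ} {a : (Matrix (Fin n) (Fin n) K)ˣ}
    (ha : a ∈ K0set O n) : a⁻¹ ∈ K0set O n := by
  refine ⟨ha.2, ?_⟩
  rw [inv_inv]
  exact ha.1

lemma conj_mem_K0set_iff {O : Subring K} {n : ℕ} {u h : (Matrix (Fin n) (Fin n) K)ˣ}
    (hu : u ∈ K0set O n) : h ∈ K0set O n ↔ u * h * u⁻¹ ∈ K0set O n := by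
  constructor
  · intro hh
    exact mul_mem_K0set (mul_mem_K0set hu hh) (inv_mem_K0set hu)
  · intro hh
    have hrw : h = u⁻¹ * (u * h * u⁻¹) * u := by group
    rw [hrw]
    exact mul_mem_K0set (mul_mem_K0set (inv_mem_K0set hu) hh) hu

lemma zset_comm {n : ℕ} {z w : (Matrix (Fin n) (Fin n) K)ˣ} (hz : z ∈ Zset K n) :
    z * w = w * z := by
  obtain ⟨lam, -, hzv⟩ := hz
  apply Units.ext
  show z.val * w.val = w.val * z.val
  rw [hzv, Matrix.smul_mul, Matrix.mul_smul, one_mul, mul_one]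

/-- The normalizer of `K₀ = GL_n(O)` in `GL_n(K)` is `K₀ · Z`, where `O` is a discrete
valuation ring with fraction field `K` and `Z` is the group of scalar matrices. -/
theorem normalizer_GLnO_eq_K0_mul_Z (O : Subring K) [IsDiscreteValuationRing ↥O]
    [IsFractionRing ↥O K] (n : ℕ) :
    {g : (Matrix (Fin n) (Fin n) K)ˣ | ∀ h, h ∈ K0set O n ↔ g * h * g⁻¹ ∈ K0set O n}
      = K0set O n * Zset K n := by
  have hone : (1 : (Matrix (Fin n) (Fin n) K)ˣ) ∈ K0set O n := by
    constructor <;>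
    · intro i j
      show (1 : Matrix (Fin n) (Fin n) K) i j ∈ O
      rw [Matrix.one_apply]
      split_ifs
      exacts [O.one_mem, O.zero_mem]
  ext g
  simp only [Set.mem_setOf_eq]
  constructor
  · intro hg
    rcases Nat.lt_or_ge n 2 with hn | hn
    · -- degenerate cases n = 0, 1
      interval_cases n
      · exact Set.mem_mul.mpr ⟨1, hone, g,
          ⟨1, one_ne_zero, by ext i j; exact i.elim0⟩, one_mul g⟩
      · have hdet : IsUnit (g.val).det := (Matrix.isUnit_iff_isUnit_det _).mp g.isUnit
        rw [Matrix.det_fin_one] at hdet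
        refine Set.mem_mul.mpr ⟨1, hone, g, ⟨g.val 0 0, hdet.ne_zero, ?_⟩, one_mul g⟩
        ext i j
        fin_cases i; fin_cases j
        simp [Matrix.one_apply]
    · -- main case n ≥ 2
      haveI : NeZero n := ⟨by omega⟩
      haveI : Nontrivial (Fin n) := Fin.nontrivial_iff_two_le.mpr hn
      set v := ValuationRing.valuation ↥O K with hv
      have hmem : ∀ x : K, x ∈ O ↔ v x ≤ 1 := by
        intro x
        rw [hv, ← Valuation.mem_integer_iff, ValuationRing.mem_integer_iff]
        constructor
        · intro h; exact ⟨⟨x, h⟩, rfl⟩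
        · rintro ⟨a, rfl⟩; exact a.2
      -- product condition from conjugating elementary matrices
      have hprod : ∀ i j, i ≠ j → ∀ k l,
          g.val k i * (g⁻¹).val j l ∈ O := by
        intro i j hij k l
        set B : Matrix (Fin n) (Fin n) K := Matrix.single i j 1 with hB
        have hB2 : B * B = 0 := Matrix.single_mul_single_of_ne (c := (1:K)) i j i (Ne.symm hij) 1
        have hE1 : (1 + B) * (1 - B) = 1 := by
          rw [mul_sub, mul_one, add_mul, one_mul, hB2]
          abel
        have hE2 : (1 - B) * (1 + B) = 1 := by
          rw [mul_add, mul_one, sub_mul, one_mul, hB2]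
          abel
        set E : (Matrix (Fin n) (Fin n) K)ˣ := ⟨1 + B, 1 - B, hE1, hE2⟩ with hE
        have hOone : ∀ k l, ((1 : Matrix (Fin n) (Fin n) K) k l) ∈ O := by
          intro k l
          rw [Matrix.one_apply]
          split_ifs
          exacts [O.one_mem, O.zero_mem]
        have hOB : ∀ k l, B k l ∈ O := by
          intro k l
          rw [hB]
          simp only [Matrix.single, Matrix.of_apply]
          split_ifs
          exacts [O.one_mem, O.zero_mem]
        have hEK0 : E ∈ K0set O n := by
          constructor
          · intro k l
            show ((1 : Matrix (Fin n) (Fin n) K) + B) k l ∈ O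
            rw [Matrix.add_apply]
            exact O.add_mem (hOone k l) (hOB k l)
          · intro k l
            show ((1 : Matrix (Fin n) (Fin n) K) - B) k l ∈ O
            rw [Matrix.sub_apply]
            exact O.sub_mem (hOone k l) (hOB k l)
        have h2 := ((hg E).mp hEK0).1 k l
        have hcalc : (g * E * g⁻¹).val k l
            = (1 : Matrix (Fin n) (Fin n) K) k l + g.val k i * (g⁻¹).val j l := by
          show (g.val * (1 + B) * (g⁻¹).val) k l = _
          rw [mul_add, mul_one, add_mul, Units.mul_inv]
          rw [Matrix.add_apply]
          congr 1
          rw [Matrix.mul_apply]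
          rw [Finset.sum_eq_single j]
          · rw [hB, Matrix.mul_single_apply_same, mul_one]
          · intro m _ hm
            rw [hB, Matrix.mul_single_apply_of_ne (hbj := hm), zero_mul]
          · intro hj; exact absurd (Finset.mem_univ j) hj
        rw [hcalc] at h2
        have h3 := O.sub_mem h2 (hOone k l)
        simpa using h3
      have hprodv : ∀ i j, i ≠ j → ∀ k l,
          v (g.val k i) * v ((g⁻¹).val j l) ≤ 1 := by
        intro i j hij k l
        rw [← map_mul]
        exact (hmem _).mp (hprod i j hij k l)
      -- column maxima of valuations of g
      have hmax : ∀ c : Fin n, ∃ k, ∀ k', v (g.val k' c) ≤ v (g.val k c) := by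
        intro c
        obtain ⟨k, -, hk⟩ := Finset.exists_max_image Finset.univ
          (fun k => v (g.val k c)) Finset.univ_nonempty
        exact ⟨k, fun k' => hk k' (Finset.mem_univ k')⟩
      choose k hk using hmax
      -- diagonal of g⁻¹ * g = 1 gives lower bounds
      have hrow : ∀ r : Fin n, ∃ m, (1 : ValuationRing.ValueGroup ↥O K)
          ≤ v ((g⁻¹).val r m) * v (g.val m r) := by
        intro r
        by_contra hcon
        push_neg at hcon
        have h1 : ((g⁻¹).val * g.val) r r = 1 := by
          rw [Units.inv_mul]; exact Matrix.one_apply_eq r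
        have h2 : v (∑ m, (g⁻¹).val r m * g.val m r) < 1 :=
          Valuation.map_sum_lt v one_ne_zero
            (fun m _ => by rw [map_mul]; exact hcon m)
        rw [← Matrix.mul_apply, h1, map_one] at h2
        exact absurd h2 (lt_irrefl 1)
      -- all column maxima are equal
      have hle : ∀ c c', c ≠ c' → v (g.val (k c) c) ≤ v (g.val (k c') c') := by
        intro c c' hcc
        obtain ⟨m, hm⟩ := hrow c'
        have ht0 : v ((g⁻¹).val c' m) ≠ 0 := by
          intro h0
          rw [h0, zero_mul] at hm
          exact absurd hm (by simp)
        have h1 : v (g.val (k c) c) * v ((g⁻¹).val c' m) ≤ 1 :=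
          hprodv c c' hcc (k c) m
        have h2 : (1 : ValuationRing.ValueGroup ↥O K)
            ≤ v (g.val (k c') c') * v ((g⁻¹).val c' m) := by
          calc (1 : ValuationRing.ValueGroup ↥O K)
              ≤ v ((g⁻¹).val c' m) * v (g.val m c') := hm
            _ = v (g.val m c') * v ((g⁻¹).val c' m) := mul_comm _ _
            _ ≤ v (g.val (k c') c') * v ((g⁻¹).val c' m) :=
                mul_le_mul_left (hk c' m) _
        exact le_of_mul_le_mul_right (h1.trans h2) (zero_lt_iff.mpr ht0)
      have heq : ∀ c c', v (g.val (k c) c) = v (g.val (k c') c') := by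
        intro c c'
        rcases eq_or_ne c c' with rfl | h
        · rfl
        · exact le_antisymm (hle _ _ h) (hle _ _ h.symm)
      set c₀ : Fin n := 0 with hc₀
      set lam : K := g.val (k c₀) c₀ with hlam
      have hlam0 : v lam ≠ 0 := by
        intro h0
        obtain ⟨m, hm⟩ := hrow c₀
        have hvg : v (g.val m c₀) = 0 :=
          le_antisymm (h0 ▸ hk c₀ m) zero_le'
        rw [hvg, mul_zero] at hm
        exact absurd hm (by simp)
      have hlamne : lam ≠ 0 := fun h => hlam0 (by rw [h, map_zero])
      have hgood1 : ∀ kk c, v (g.val kk c) ≤ v lam :=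
        fun kk c => (hk c kk).trans (heq c c₀).le
      have hgood2 : ∀ r l, v lam * v ((g⁻¹).val r l) ≤ 1 := by
        intro r l
        obtain ⟨c, hc⟩ := exists_ne r
        calc v lam * v ((g⁻¹).val r l)
            = v (g.val (k c) c) * v ((g⁻¹).val r l) := by rw [hlam, heq c₀ c]
          _ ≤ 1 := hprodv c r hc (k c) l
      -- assemble the decomposition
      refine Set.mem_mul.mpr ⟨⟨lam⁻¹ • g.val, lam • (g⁻¹).val, ?_, ?_⟩, ⟨?_, ?_⟩,
        ⟨lam • (1 : Matrix (Fin n) (Fin n) K), lam⁻¹ • (1 : Matrix (Fin n) (Fin n) K),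
          ?_, ?_⟩, ⟨lam, hlamne, rfl⟩, ?_⟩
      · rw [Matrix.smul_mul, Matrix.mul_smul, smul_smul, inv_mul_cancel₀ hlamne,
          one_smul, Units.mul_inv]
      · rw [Matrix.smul_mul, Matrix.mul_smul, smul_smul, mul_inv_cancel₀ hlamne,
          one_smul, Units.inv_mul]
      · intro i j
        show (lam⁻¹ • g.val) i j ∈ O
        rw [Matrix.smul_apply, smul_eq_mul, hmem, map_mul, map_inv₀]
        have hx := hgood1 i j
        have h5 : (v lam)⁻¹ * v (g.val i j) * v lam ≤ 1 * v lam := by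
          rw [one_mul, mul_comm ((v lam)⁻¹) _, mul_assoc, inv_mul_cancel₀ hlam0, mul_one]
          exact hx
        exact le_of_mul_le_mul_right h5 (zero_lt_iff.mpr hlam0)
      · intro i j
        show (lam • (g⁻¹).val) i j ∈ O
        rw [Matrix.smul_apply, smul_eq_mul, hmem, map_mul]
        exact hgood2 i j
      · rw [Matrix.smul_mul, Matrix.mul_smul, smul_smul, mul_inv_cancel₀ hlamne,
          one_smul, one_mul]
      · rw [Matrix.smul_mul, Matrix.mul_smul, smul_smul, inv_mul_cancel₀ hlamne,
          one_smul, one_mul]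
      · apply Units.ext
        show (lam⁻¹ • g.val) * (lam • (1 : Matrix (Fin n) (Fin n) K)) = g.val
        rw [Matrix.mul_smul, mul_one, smul_smul, mul_inv_cancel₀ hlamne, one_smul]
  · intro hgm h
    obtain ⟨u, hu, z, hz, rfl⟩ := Set.mem_mul.mp hgm
    have h1 : z * h = h * z := zset_comm hz
    have key : u * z * h * (u * z)⁻¹ = u * h * u⁻¹ := by
      rw [mul_inv_rev]
      calc u * z * h * (z⁻¹ * u⁻¹) = u * (z * h * z⁻¹) * u⁻¹ := by group
        _ = u * (h * z * z⁻¹) * u⁻¹ := by rw [h1]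
        _ = u * h * u⁻¹ := by rw [mul_inv_cancel_right]
    rw [key]
    exact conj_mem_K0set_iff hu

end Stmt1
end

section
/- Let q = p^r be a power of an odd prime p, n an odd positive integer, k = 𝔽_{q²} and l = 𝔽_{q^{2n}}, so l/k has degree n. For x ∈ k set x̄ = x^q, and for X = (x_ij) ∈ M_n(k) set X̄ = (x̄_ij). Fix a k-basis of l and for β ∈ l let m_β ∈ M_n(k) be the matrix of multiplication by β in this basis. Let α ∈ l^× satisfy l = k(α) and α^{q^n} = α^{-1}. Then the set Ξ(α) = {X ∈ M_n(k) : m_α · X · ᵗ(m̄_α) = X} has exactly q^{2n} elements. -/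
open Matrix

private lemma charP_of_card_pow {K : Type*} [Field K] [Fintype K] {p : ℕ}
    (hp : p.Prime) (m : ℕ) (hm : 0 < m) (hK : Fintype.card K = p ^ m) : CharP K p := by
  haveI : CharP K (ringChar K) := ringChar.charP K
  obtain ⟨s, hsp, hs⟩ := FiniteField.card K (ringChar K)
  have hdvd : p ∣ ringChar K := by
    have h1 : p ∣ (ringChar K) ^ (s : ℕ) := by
      rw [← hs, hK]; exact dvd_pow_self p hm.ne'
    exact hp.dvd_of_dvd_pow h1
  have hpe : p = ringChar K := (Nat.prime_dvd_prime_iff_eq hp hsp).mp hdvd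
  rw [hpe]; exact ringChar.charP K

private lemma pow_q_even {k : Type*} [Field k] [Fintype k] {q : ℕ}
    (h : Fintype.card k = q ^ 2) (c : k) (m : ℕ) : c ^ q ^ (2 * m) = c := by
  induction m with
  | zero => simp
  | succ m ih =>
    have h2 : 2 * (m + 1) = 2 * m + 2 := by ring
    rw [h2, pow_add, pow_mul, ih, ← h, FiniteField.pow_card]

private lemma pow_q_odd {k : Type*} [Field k] [Fintype k] {q n : ℕ}
    (h : Fintype.card k = q ^ 2) (hn : Odd n) (c : k) : c ^ q ^ n = c ^ q := by
  obtain ⟨m, rfl⟩ := hn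
  rw [pow_succ, pow_mul, pow_q_even h]

/-- Let `q = p^r` (`p` an odd prime), `n` odd, `k = 𝔽_{q²}`, `l = 𝔽_{q^{2n}}` (so
`[l : k] = n`), `b` a `k`-basis of `l`, and `α ∈ l^×` with `l = k(α)` and
`α^{q^n} = α⁻¹`.  Writing `m_α` for the matrix of multiplication by `α` in the basis
`b` and `bar` for the entrywise `q`-power Frobenius, the set
`Ξ(α) = {X ∈ M_n(k) | m_α · X · ᵗ(m̄_α) = X}` has exactly `q^{2n}` elements. -/
theorem card_Xi_alpha (p r q n : ℕ) (hp : p.Prime) (hodd : Odd p) (hr : 0 < r)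
    (hq : q = p ^ r) (hn : Odd n) (hn0 : 0 < n)
    (k l : Type*) [Field k] [Fintype k] [Field l] [Fintype l] [Algebra k l]
    (hcardk : Fintype.card k = q ^ 2) (hcardl : Fintype.card l = q ^ (2 * n))
    (hdeg : Module.finrank k l = n)
    (b : Module.Basis (Fin n) k l)
    (α : l) (hα0 : α ≠ 0) (hgen : Algebra.adjoin k {α} = ⊤)
    (hα : α ^ q ^ n = α⁻¹) :
    Nat.card {X : Matrix (Fin n) (Fin n) k |
        LinearMap.toMatrix b b (LinearMap.mulLeft k α) * X *
          ((LinearMap.toMatrix b b (LinearMap.mulLeft k α)).map (fun x => x ^ q))ᵀ = X}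
      = q ^ (2 * n) := by
  classical
  haveI : Fact p.Prime := ⟨hp⟩
  haveI : FiniteDimensional k l := Module.Finite.of_basis b
  haveI hck : CharP k p := charP_of_card_pow hp (r * 2) (by positivity)
    (by rw [hcardk, hq, ← pow_mul])
  haveI hcl : CharP l p := charP_of_card_pow hp (r * (2 * n)) (by positivity)
    (by rw [hcardl, hq, ← pow_mul])
  -- the `q^n`-power Frobenius on `l`, as a ring hom
  set φ : l →+* l := iterateFrobenius l p (r * n) with hφdef
  have hφ : ∀ x : l, φ x = x ^ q ^ n := by
    intro x
    rw [hφdef, iterateFrobenius_def, hq, ← pow_mul]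
  have hφalg : ∀ c : k, φ (algebraMap k l c) = algebraMap k l (c ^ q) := by
    intro c
    rw [hφ, ← map_pow, pow_q_odd hcardk hn]
  have hφsmul : ∀ (c : k) (x : l), φ (c • x) = c ^ q • φ x := by
    intro c x
    rw [Algebra.smul_def, _root_.map_mul, hφalg, Algebra.smul_def]
  set A := LinearMap.toMatrix b b (LinearMap.mulLeft k α) with hA
  have hAdef : ∀ s j, A s j = b.repr (α * b j) s := by
    intro s j; rw [hA, LinearMap.toMatrix_apply, LinearMap.mulLeft_apply]
  have hsum : ∀ j, ∑ s, A s j • b s = α * b j := by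
    intro j
    conv_rhs => rw [← b.sum_repr (α * b j)]
    exact Finset.sum_congr rfl fun s _ => by rw [hAdef]
  have hφα : φ α = α⁻¹ := by rw [hφ, hα]
  have hkey : ∀ j, ∑ s, (A s j ^ q) • φ (b s) = α⁻¹ * φ (b j) := by
    intro j
    have h1 := congrArg φ (hsum j)
    rw [map_sum, _root_.map_mul, hφα] at h1
    simpa only [hφsmul] using h1
  -- the Gram matrix of the twisted trace pairing
  set J : Matrix (Fin n) (Fin n) k :=
    Matrix.of (fun i j => Algebra.trace k l (φ (b i) * b j)) with hJdef
  have hJentry : ∀ i j, J i j = Algebra.trace k l (φ (b i) * b j) := fun i j => rfl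
  set Ab := A.map (fun x : k => x ^ q) with hAb
  have hJ : Abᵀ * J * A = J := by
    ext i j
    have lhs : (Abᵀ * J * A) i j = ∑ t, ∑ s, (A s i ^ q * A t j) * J s t := by
      rw [Matrix.mul_apply]
      refine Finset.sum_congr rfl fun t _ => ?_
      rw [Matrix.mul_apply, Finset.sum_mul]
      refine Finset.sum_congr rfl fun s _ => ?_
      simp only [hAb, Matrix.transpose_apply, Matrix.map_apply]
      ring
    have rhs : J i j = ∑ s, ∑ t, (A s i ^ q * A t j) * J s t := by
      have e1 : φ (b i) * b j = (α⁻¹ * φ (b i)) * (α * b j) := by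
        field_simp
      rw [hJentry, e1, ← hkey i, ← hsum j, Finset.sum_mul_sum, map_sum]
      refine Finset.sum_congr rfl fun s _ => ?_
      rw [map_sum]
      refine Finset.sum_congr rfl fun t _ => ?_
      rw [smul_mul_smul_comm, _root_.map_smul, smul_eq_mul, hJentry]
    rw [lhs, rhs, Finset.sum_comm]
  -- `J` is invertible
  have hdet : IsUnit J.det := by
    rw [isUnit_iff_ne_zero]
    intro h0
    obtain ⟨c, hc0, hcv⟩ := (Matrix.exists_mulVec_eq_zero_iff).mpr h0
    set y : l := ∑ j, c j • b j with hy
    have htr : ∀ i, Algebra.trace k l (φ (b i) * y) = 0 := by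
      intro i
      have h1 := congrFun hcv i
      simp only [Matrix.mulVec, dotProduct, Pi.zero_apply] at h1
      rw [hy, Finset.mul_sum, map_sum]
      rw [← h1]
      refine Finset.sum_congr rfl fun t _ => ?_
      rw [mul_smul_comm, _root_.map_smul, smul_eq_mul, hJentry, mul_comm]
    have hally : ∀ x : l, Algebra.trace k l (x * y) = 0 := by
      intro x
      have hφφ : φ (φ x) = x := by
        rw [hφ, hφ, ← pow_mul, ← pow_add, ← two_mul, ← hcardl, FiniteField.pow_card]
      have hx : x = ∑ s, (b.repr (φ x) s ^ q) • φ (b s) := by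
        conv_lhs => rw [← hφφ]
        conv_lhs => rw [← b.sum_repr (φ x), map_sum]
        exact Finset.sum_congr rfl fun s _ => hφsmul _ _
      rw [hx, Finset.sum_mul, map_sum]
      rw [show (0 : k) = ∑ s : Fin n, 0 by simp]
      refine Finset.sum_congr rfl fun s _ => ?_
      rw [smul_mul_assoc, _root_.map_smul, smul_eq_mul, htr, mul_zero]
    have hy0 : y = 0 := (traceForm_nondegenerate k l).1 y
      (fun x => by simpa only [Algebra.traceForm_apply, mul_comm y x] using hally x)
    exact hc0 (funext (Fintype.linearIndependent_iff.mp b.linearIndependent c (hy ▸ hy0)))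
  haveI hJinv : Invertible J := J.invertibleOfIsUnitDet hdet
  -- the multiplication matrices
  set MB : l → Matrix (Fin n) (Fin n) k :=
    (fun β => LinearMap.toMatrix b b (LinearMap.mulLeft k β)) with hMB
  have hMBmul : ∀ β γ : l, MB β * MB γ = MB (β * γ) := by
    intro β γ
    simp only [hMB]
    rw [LinearMap.mulLeft_mul, LinearMap.toMatrix_comp b b b]
  have hMB1 : MB 1 = 1 := by
    simp only [hMB]
    rw [LinearMap.mulLeft_one, LinearMap.toMatrix_id]
  have hAMB : A = MB α := rfl
  haveI hAinv : Invertible A := ⟨MB α⁻¹,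
    by rw [hAMB, hMBmul, inv_mul_cancel₀ hα0, hMB1],
    by rw [hAMB, hMBmul, mul_inv_cancel₀ hα0, hMB1]⟩
  -- the entrywise Frobenius as ring hom, and invertibility of `Ab`
  set fq : k →+* k := iterateFrobenius k p r with hfqdef
  have hfq : (fun x : k => x ^ q) = ⇑fq := funext fun x => by
    rw [hfqdef, iterateFrobenius_def, hq]
  have hAbfq : Ab = A.map ⇑fq := by rw [hAb, hfq]
  have hmapone : (1 : Matrix (Fin n) (Fin n) k).map ⇑fq = 1 :=
    Matrix.map_one ⇑fq (map_zero fq) (map_one fq)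
  haveI hAbinv : Invertible Ab := ⟨(MB α⁻¹).map ⇑fq,
    by rw [hAbfq, ← Matrix.map_mul, hAMB, hMBmul, inv_mul_cancel₀ hα0, hMB1, hmapone],
    by rw [hAbfq, ← Matrix.map_mul, hAMB, hMBmul, mul_inv_cancel₀ hα0, hMB1, hmapone]⟩
  haveI hAbtinv : Invertible Abᵀ := Matrix.invertibleTranspose Ab
  -- key consequences of `hJ`
  have h1 : J * A = ⅟Abᵀ * J := by
    calc J * A = ⅟Abᵀ * (Abᵀ * J * A) := by
          rw [← mul_assoc, ← mul_assoc, invOf_mul_self, one_mul]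
    _ = ⅟Abᵀ * J := by rw [hJ]
  have h2 : A * ⅟J * Abᵀ = ⅟J := by
    refine (invOf_eq_right_inv ?_).symm
    calc J * (A * ⅟J * Abᵀ) = (J * A) * ⅟J * Abᵀ := by
          rw [← mul_assoc, ← mul_assoc]
    _ = ⅟Abᵀ * (J * ⅟J) * Abᵀ := by rw [h1, mul_assoc ⅟Abᵀ J ⅟J]
    _ = 1 := by rw [mul_invOf_self, mul_one, invOf_mul_self]
  have hAcomm : ∀ β, A * MB β = MB β * A := fun β => by
    rw [hAMB, hMBmul, hMBmul, mul_comm]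
  -- membership of the candidates
  have hmem : ∀ β, A * (MB β * ⅟J) * Abᵀ = MB β * ⅟J := by
    intro β
    calc A * (MB β * ⅟J) * Abᵀ = (A * MB β) * ⅟J * Abᵀ := by rw [← mul_assoc]
    _ = MB β * (A * ⅟J * Abᵀ) := by
          rw [hAcomm, mul_assoc, mul_assoc, mul_assoc]
    _ = MB β * ⅟J := by rw [h2]
  -- every matrix commuting with `A` is a multiplication matrix
  have hcent : ∀ C : Matrix (Fin n) (Fin n) k, C * A = A * C → ∃ β, C = MB β := by
    intro C hC
    set f : l →ₗ[k] l := Matrix.toLin b b C with hf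
    have hfα : ∀ x, f (α * x) = α * f x := by
      intro x
      have h3 := congrArg (Matrix.toLin b b) hC
      rw [Matrix.toLin_mul b b b, Matrix.toLin_mul b b b, hA, Matrix.toLin_toMatrix] at h3
      have h4 := congrFun (congrArg (DFunLike.coe) h3) x
      simpa using h4
    have hfβ : ∀ β, β ∈ Algebra.adjoin k {α} → ∀ x, f (β * x) = β * f x := by
      intro β hβ
      induction hβ using Algebra.adjoin_induction with
      | mem z hz =>
        obtain rfl : z = α := hz
        exact hfα
      | algebraMap c =>
        intro x
        rw [← Algebra.smul_def, _root_.map_smul, Algebra.smul_def]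
      | add z w hz hw ihz ihw =>
        intro x
        rw [add_mul, map_add, ihz, ihw, add_mul]
      | mul z w hz hw ihz ihw =>
        intro x
        rw [mul_assoc, ihz, ihw, mul_assoc]
    refine ⟨f 1, ?_⟩
    have hfm : f = LinearMap.mulLeft k (f 1) := by
      apply LinearMap.ext
      intro x
      rw [LinearMap.mulLeft_apply]
      conv_lhs => rw [← mul_one x]
      rw [hfβ x (by rw [hgen]; exact Algebra.mem_top) 1, mul_comm]
    have h5 : LinearMap.toMatrix b b f = C := by
      rw [hf, LinearMap.toMatrix_toLin]
    rw [← h5, hfm]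
    simp only [hMB, LinearMap.mulLeft_apply, mul_one]
  -- the bijection `l ≃ Ξ(α)`
  set g : l → {X : Matrix (Fin n) (Fin n) k | A * X * Abᵀ = X} :=
    (fun β => ⟨MB β * ⅟J, hmem β⟩) with hg
  have hgbij : Function.Bijective g := by
    constructor
    · intro β γ hβγ
      have h6 : MB β * ⅟J = MB γ * ⅟J := congrArg Subtype.val hβγ
      have h7 : MB β = MB γ := by
        calc MB β = MB β * ⅟J * J := by rw [mul_assoc, invOf_mul_self, mul_one]
        _ = MB γ * ⅟J * J := by rw [h6]
        _ = MB γ := by rw [mul_assoc, invOf_mul_self, mul_one]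
      have h8 := congrArg (Matrix.toLin b b) h7
      simp only [hMB, Matrix.toLin_toMatrix] at h8
      have h9 := congrFun (congrArg (DFunLike.coe) h8) 1
      simpa using h9
    · rintro ⟨X, hX⟩
      have hX' : A * X * Abᵀ = X := hX
      have hAX : A * X = X * ⅟Abᵀ := by
        calc A * X = (A * X * Abᵀ) * ⅟Abᵀ := by rw [mul_assoc, mul_invOf_self, mul_one]
        _ = X * ⅟Abᵀ := by rw [hX']
      have hcomm : (X * J) * A = A * (X * J) := by
        calc X * J * A = X * (⅟Abᵀ * J) := by rw [mul_assoc, h1]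
        _ = (X * ⅟Abᵀ) * J := by rw [← mul_assoc]
        _ = (A * X) * J := by rw [← hAX]
        _ = A * (X * J) := by rw [mul_assoc]
      obtain ⟨β, hβ⟩ := hcent (X * J) hcomm
      refine ⟨β, ?_⟩
      apply Subtype.ext
      show MB β * ⅟J = X
      rw [← hβ, mul_assoc, mul_invOf_self, mul_one]
  calc Nat.card {X : Matrix (Fin n) (Fin n) k | A * X * Abᵀ = X}
      = Nat.card l := (Nat.card_congr (Equiv.ofBijective g hgbij)).symm
  _ = q ^ (2 * n) := by rw [Nat.card_eq_fintype_card, hcardl]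
end

section
/- Let q = p^r be a power of an odd prime p, n an odd positive integer, k = 𝔽_{q²} and l = 𝔽_{q^{2n}}, so l/k has degree n. With bar the q-power Frobenius, m_β the multiplication matrix of β ∈ l in a fixed k-basis of l, and α ∈ l^× with l = k(α) and α^{q^n} = α^{-1}, the two sets Ξ₁(α) = {X ∈ M_n(k) : m_α·X·ᵗ(m̄_α) = X and ᵗX̄ = X} and Ξ₋₁(α) = {X ∈ M_n(k) : m_α·X·ᵗ(m̄_α) = X and ᵗX̄ = -X} have the same cardinality; indeed, for any γ ∈ k^× with γ^q = -γ, the map X ↦ γ·X is a bijection from Ξ₁(α) onto Ξ₋₁(α). -/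
open Matrix


private lemma exists_gamma_aux {k : Type*} [Field k] [Fintype k] (q : ℕ) (hodd : Odd q)
    (hq3 : 3 ≤ q) (hcard : Fintype.card k = q ^ 2) : ∃ γ : k, γ ≠ 0 ∧ γ ^ q = -γ := by
  obtain ⟨t, rfl⟩ := hodd
  have ht1 : 1 ≤ t := by omega
  obtain ⟨g, hg⟩ := IsCyclic.exists_generator (α := kˣ)
  have horder : orderOf g = (2 * t + 1) ^ 2 - 1 := by
    rw [orderOf_eq_card_of_forall_mem_zpowers hg]
    rw [Nat.card_units, Nat.card_eq_fintype_card, hcard]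
  set c : k := (g : k) with hc
  have hc0 : c ≠ 0 := g.ne_zero
  have hsq : (2 * t + 1) ^ 2 = 4 * t ^ 2 + 4 * t + 1 := by ring
  have hE : (2 * t + 1) ^ 2 - 1 = (2 * t ^ 2 + 2 * t) + (2 * t ^ 2 + 2 * t) := by omega
  have hx2 : c ^ (2 * t ^ 2 + 2 * t) * c ^ (2 * t ^ 2 + 2 * t) = 1 := by
    rw [← pow_add, ← hE]
    have h1 := FiniteField.pow_card_sub_one_eq_one c hc0
    rw [hcard] at h1
    exact h1
  have hx1 : c ^ (2 * t ^ 2 + 2 * t) ≠ 1 := by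
    intro h
    have hgE : g ^ (2 * t ^ 2 + 2 * t) = 1 := by
      apply Units.ext
      rw [Units.val_pow_eq_pow_val, Units.val_one]
      exact h
    have hdvd := orderOf_dvd_of_pow_eq_one hgE
    rw [horder] at hdvd
    have hle := Nat.le_of_dvd (by positivity) hdvd
    nlinarith
  have hneg : c ^ (2 * t ^ 2 + 2 * t) = -1 := by
    rcases mul_self_eq_one_iff.mp hx2 with h | h
    · exact absurd h hx1
    · exact h
  refine ⟨c ^ (t + 1), pow_ne_zero _ hc0, ?_⟩
  have hexp : (t + 1) * (2 * t + 1) = (2 * t ^ 2 + 2 * t) + (t + 1) := by ring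
  rw [← pow_mul, hexp, pow_add, hneg]
  ring

private lemma smul_map_pow_aux {k : Type*} [CommRing k] {n q : ℕ} (γ : k)
    (X : Matrix (Fin n) (Fin n) k) :
    (γ • X).map (fun x => x ^ q) = (γ ^ q) • X.map (fun x => x ^ q) := by
  ext i j
  simp [Matrix.map_apply, Matrix.smul_apply, smul_eq_mul, mul_pow]

/-- With `q = p^r` (`p` odd prime), `n` odd, `k = 𝔽_{q²}`, `l = 𝔽_{q^{2n}}`, `m_α` the
multiplication matrix of `α` in a fixed `k`-basis of `l`, where `l = k(α)` and
`α^{q^n} = α⁻¹`: for any `γ ∈ k^×` with `γ^q = -γ`, the map `X ↦ γ·X` is a bijection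
from `Ξ₁(α)` onto `Ξ₋₁(α)`; in particular these two sets have the same cardinality. -/
theorem bij_Xi_one_Xi_neg_one (p r q n : ℕ) (hp : p.Prime) (hodd : Odd p) (hr : 0 < r)
    (hq : q = p ^ r) (hn : Odd n) (hn0 : 0 < n)
    (k l : Type*) [Field k] [Fintype k] [Field l] [Fintype l] [Algebra k l]
    (hcardk : Fintype.card k = q ^ 2) (hcardl : Fintype.card l = q ^ (2 * n))
    (hdeg : Module.finrank k l = n)
    (b : Module.Basis (Fin n) k l)
    (α : l) (hα0 : α ≠ 0) (hgen : Algebra.adjoin k {α} = ⊤)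
    (hα : α ^ q ^ n = α⁻¹) :
    (∀ γ : k, γ ≠ 0 → γ ^ q = -γ →
      Set.BijOn (fun X => γ • X)
        {X : Matrix (Fin n) (Fin n) k |
          LinearMap.toMatrix b b (LinearMap.mulLeft k α) * X *
            ((LinearMap.toMatrix b b (LinearMap.mulLeft k α)).map (fun x => x ^ q))ᵀ = X ∧
          (X.map (fun x => x ^ q))ᵀ = X}
        {X : Matrix (Fin n) (Fin n) k |
          LinearMap.toMatrix b b (LinearMap.mulLeft k α) * X *
            ((LinearMap.toMatrix b b (LinearMap.mulLeft k α)).map (fun x => x ^ q))ᵀ = X ∧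
          (X.map (fun x => x ^ q))ᵀ = -X}) ∧
    Nat.card {X : Matrix (Fin n) (Fin n) k |
        LinearMap.toMatrix b b (LinearMap.mulLeft k α) * X *
          ((LinearMap.toMatrix b b (LinearMap.mulLeft k α)).map (fun x => x ^ q))ᵀ = X ∧
        (X.map (fun x => x ^ q))ᵀ = X}
      = Nat.card {X : Matrix (Fin n) (Fin n) k |
          LinearMap.toMatrix b b (LinearMap.mulLeft k α) * X *
            ((LinearMap.toMatrix b b (LinearMap.mulLeft k α)).map (fun x => x ^ q))ᵀ = X ∧
          (X.map (fun x => x ^ q))ᵀ = -X} := by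
  have hqodd : Odd q := hq ▸ hodd.pow
  have hq3 : 3 ≤ q := by
    have hp3 : 3 ≤ p := by
      obtain ⟨m, hm⟩ := hodd
      have := hp.two_le
      omega
    calc 3 ≤ p := hp3
      _ ≤ p ^ r := Nat.le_self_pow hr.ne' p
      _ = q := hq.symm
  have key : ∀ γ : k, γ ≠ 0 → γ ^ q = -γ →
      Set.BijOn (fun X => γ • X)
        {X : Matrix (Fin n) (Fin n) k |
          LinearMap.toMatrix b b (LinearMap.mulLeft k α) * X *
            ((LinearMap.toMatrix b b (LinearMap.mulLeft k α)).map (fun x => x ^ q))ᵀ = X ∧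
          (X.map (fun x => x ^ q))ᵀ = X}
        {X : Matrix (Fin n) (Fin n) k |
          LinearMap.toMatrix b b (LinearMap.mulLeft k α) * X *
            ((LinearMap.toMatrix b b (LinearMap.mulLeft k α)).map (fun x => x ^ q))ᵀ = X ∧
          (X.map (fun x => x ^ q))ᵀ = -X} := by
    intro γ hγ0 hγ
    refine ⟨?_, ?_, ?_⟩
    · intro X hX
      obtain ⟨h1, h2⟩ := hX
      constructor
      · show _ * (γ • X) * _ = γ • X
        rw [Matrix.mul_smul, Matrix.smul_mul, h1]
      · show ((γ • X).map (fun x => x ^ q))ᵀ = -(γ • X)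
        rw [smul_map_pow_aux, Matrix.transpose_smul, h2, hγ, neg_smul]
    · exact (smul_right_injective (Matrix (Fin n) (Fin n) k) hγ0).injOn
    · intro Y hY
      obtain ⟨h1, h2⟩ := hY
      have hinv : γ⁻¹ ^ q = -γ⁻¹ := by rw [inv_pow, hγ, inv_neg]
      refine ⟨γ⁻¹ • Y, ⟨?_, ?_⟩, ?_⟩
      · show _ * (γ⁻¹ • Y) * _ = γ⁻¹ • Y
        rw [Matrix.mul_smul, Matrix.smul_mul, h1]
      · show ((γ⁻¹ • Y).map (fun x => x ^ q))ᵀ = γ⁻¹ • Y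
        rw [smul_map_pow_aux, Matrix.transpose_smul, h2, hinv, neg_smul, smul_neg, neg_neg]
      · show γ • γ⁻¹ • Y = Y
        rw [smul_smul, mul_inv_cancel₀ hγ0, one_smul]
  obtain ⟨γ, hγ0, hγq⟩ := exists_gamma_aux q hqodd hq3 hcardk
  exact ⟨key, Nat.card_congr (Set.BijOn.equiv _ (key γ hγ0 hγq))⟩
end

section
/- Let q = p^r be a power of an odd prime p, n an odd positive integer, k = 𝔽_{q²} and l = 𝔽_{q^{2n}}, so l/k has degree n. Let α ∈ l^× satisfy l = k(α) and α^{q^n} = α^{-1}, let f ∈ k[x] be the minimal polynomial of α over k, fix a k-basis of l and let M = m_α ∈ M_n(k) be the matrix of multiplication by α (which is invertible since α ≠ 0). Let M̄ denote the matrix obtained from M by applying x ↦ x^q to every entry. Then f(ᵗ(M̄)^{-1}) = 0; that is, the transpose of the entrywise-Frobenius of M, inverted, is also a root of the minimal polynomial of α over k. -/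
open Matrix

open Polynomial in
lemma aeval_transpose' {m : Type*} [Fintype m] [DecidableEq m] {R : Type*} [CommRing R]
    (A : Matrix m m R) (p : Polynomial R) :
    Polynomial.aeval Aᵀ p = (Polynomial.aeval A p)ᵀ := by
  induction p using Polynomial.induction_on' with
  | add p q hp hq => simp [hp, hq]
  | monomial e c =>
      simp only [Polynomial.aeval_monomial, ← Algebra.smul_def, Matrix.transpose_smul,
        Matrix.transpose_pow]


-- aux: reverse evaluation in a (possibly noncommutative) algebra
lemma aeval_reverse_mul_pow' {R A : Type*} [CommRing R] [Ring A] [Algebra R A]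
    (x : A) [Invertible x] (f : Polynomial R) :
    Polynomial.aeval (⅟x) f.reverse * x ^ f.natDegree = Polynomial.aeval x f := by
  rw [Polynomial.aeval_eq_sum_range'
      (lt_of_le_of_lt f.reverse_natDegree_le (Nat.lt_succ_self f.natDegree)),
    Polynomial.aeval_eq_sum_range' (Nat.lt_succ_self f.natDegree),
    Finset.sum_mul, ← Finset.sum_range_reflect]
  apply Finset.sum_congr rfl
  intro i hi
  rw [Finset.mem_range, Nat.lt_succ_iff] at hi
  rw [Nat.succ_sub_one, Polynomial.coeff_reverse, Polynomial.revAt_le (Nat.sub_le _ _),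
    Nat.sub_sub_self hi, smul_mul_assoc]
  congr 1
  have hx : x ^ f.natDegree = x ^ (f.natDegree - i) * x ^ i := by
    rw [← pow_add, Nat.sub_add_cancel hi]
  rw [hx, ← mul_assoc]
  have h2 : (⅟x) ^ (f.natDegree - i) * x ^ (f.natDegree - i) = 1 := by
    rw [← invOf_pow]; exact invOf_mul_self _
  rw [h2, one_mul]

/-- With `q = p^r` (`p` odd prime), `n` odd, `k = 𝔽_{q²}`, `l = 𝔽_{q^{2n}}`,
`α ∈ l^×` with `l = k(α)` and `α^{q^n} = α⁻¹`, `f` the minimal polynomial of `α`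
over `k`, and `M = m_α` the matrix of multiplication by `α` in a fixed `k`-basis:
the matrix `ᵗ(M̄)⁻¹` (entrywise `q`-power Frobenius, transpose, inverse) is also a
root of `f`. -/
theorem minpoly_transpose_frobenius_inv_root (p r q n : ℕ) (hp : p.Prime)
    (hodd : Odd p) (hr : 0 < r) (hq : q = p ^ r) (hn : Odd n) (hn0 : 0 < n)
    (k l : Type*) [Field k] [Fintype k] [Field l] [Fintype l] [Algebra k l]
    (hcardk : Fintype.card k = q ^ 2) (hcardl : Fintype.card l = q ^ (2 * n))
    (hdeg : Module.finrank k l = n)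
    (b : Module.Basis (Fin n) k l)
    (α : l) (hα0 : α ≠ 0) (hgen : Algebra.adjoin k {α} = ⊤)
    (hα : α ^ q ^ n = α⁻¹) :
    Polynomial.aeval
        ((((LinearMap.toMatrix b b (LinearMap.mulLeft k α)).map (fun x => x ^ q))ᵀ)⁻¹)
        (minpoly k α) = 0 := by
  have hfact : Fact p.Prime := ⟨hp⟩
  -- characteristics
  have hck : CharP k p := (CharP.charP_iff_prime_eq_zero hp).2 (by
    have h0 : ((Fintype.card k : k)) = 0 := Nat.cast_card_eq_zero k
    rw [hcardk, hq, ← pow_mul, Nat.cast_pow] at h0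
    exact pow_eq_zero_iff (by positivity) |>.mp h0)
  have hcl : CharP l p := (CharP.charP_iff_prime_eq_zero hp).2 (by
    have h0 : ((Fintype.card l : l)) = 0 := Nat.cast_card_eq_zero l
    rw [hcardl, hq, ← pow_mul, Nat.cast_pow] at h0
    exact pow_eq_zero_iff (by positivity) |>.mp h0)
  -- the q-power maps as ring homs
  let σ : k →+* k := iterateFrobenius k p r
  have hσ : ∀ c : k, σ c = c ^ q := fun c => by
    simp [σ, iterateFrobenius_def, hq]
  let Φ : l →+* l := iterateFrobenius l p (r * n)
  have hΦ : ∀ x : l, Φ x = x ^ q ^ n := fun x => by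
    simp [Φ, iterateFrobenius_def, hq, pow_mul]
  -- coefficients of k are moved by Φ as by σ
  have hfix : ∀ c : k, c ^ q ^ n = c ^ q := by
    intro c
    obtain ⟨m, hm⟩ := hn
    have h1 : c ^ q ^ (2 * m) = c := by
      have := FiniteField.pow_card_pow m c
      rwa [hcardk, ← pow_mul] at this
      -- c ^ ((q^2)^m) = c; q^(2*m) = (q^2)^m
    calc c ^ q ^ n = (c ^ q ^ (2 * m)) ^ q := by
          rw [← pow_mul, ← pow_succ, hm]
      _ = c ^ q := by rw [h1]
  -- matrix of multiplication
  set M := LinearMap.toMatrix b b (LinearMap.mulLeft k α) with hMdef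
  have hM : M = Algebra.leftMulMatrix b α := by
    rw [hMdef, Algebra.leftMulMatrix_apply]
    congr 1
  -- integrality
  have : Module.Finite k l := Module.Finite.of_basis b
  have hint : IsIntegral k α := IsIntegral.of_finite k α
  set f := minpoly k α with hfdef
  have hfne : f ≠ 0 := minpoly.ne_zero hint
  have hfmonic : f.Monic := minpoly.monic hint
  set g := f.map σ with hgdef
  have hgmonic : g.Monic := hfmonic.map σ
  have hgdeg : g.natDegree = f.natDegree := hfmonic.natDegree_map σ
  -- α⁻¹ is a root of g
  have hcomm : (algebraMap k l).comp σ = Φ.comp (algebraMap k l) := by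
    ext c
    simp only [RingHom.comp_apply, hσ, hΦ, ← map_pow, hfix]
  have hg : Polynomial.aeval α⁻¹ g = 0 := by
    have h2 := congrArg Φ (minpoly.aeval k α)
    rw [map_zero, Polynomial.aeval_def, Polynomial.hom_eval₂] at h2
    rw [Polynomial.aeval_def, hgdef, Polynomial.eval₂_map, hcomm]
    rwa [hΦ, hα] at h2
  -- α is a root of reverse g
  have hαinv : Invertible α⁻¹ := invertibleOfNonzero (inv_ne_zero hα0)
  have hrev : Polynomial.aeval α g.reverse = 0 := by
    have h3 := (Polynomial.eval₂_reverse_eq_zero_iff (algebraMap k l) α⁻¹ g).mpr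
      (by rw [← Polynomial.aeval_def]; exact hg)
    rwa [invOf_eq_inv, inv_inv, ← Polynomial.aeval_def] at h3
  obtain ⟨h, hh⟩ := minpoly.dvd k α hrev
  have hhne : h ≠ 0 := by
    intro h0
    rw [h0, mul_zero] at hh
    exact hgmonic.ne_zero (Polynomial.reverse_eq_zero.mp hh)
  have hdegh : h.natDegree = 0 := by
    have h1 : g.reverse.natDegree = f.natDegree + h.natDegree := by
      rw [hh]; exact Polynomial.natDegree_mul hfne hhne
    have h2 : g.reverse.natDegree ≤ f.natDegree :=
      le_trans (Polynomial.reverse_natDegree_le g) (le_of_eq hgdeg)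
    omega
  have hhC : h = Polynomial.C (h.coeff 0) := Polynomial.eq_C_of_natDegree_eq_zero hdegh
  set c := h.coeff 0 with hcdef
  have hc0 : c ≠ 0 := fun hc => hhne (by rw [hhC, hc, map_zero])
  -- matrix side
  have hMf : Polynomial.aeval M f = 0 := by
    rw [hM, Polynomial.aeval_algHom_apply (Algebra.leftMulMatrix b) α f,
      minpoly.aeval, map_zero]
  set Sm : Matrix (Fin n) (Fin n) k →+* Matrix (Fin n) (Fin n) k := σ.mapMatrix with hSmdef
  have e2 : Sm M = M.map (fun x => x ^ q) := by
    ext i j; simp [hSmdef, hσ]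
  have e1 : (Sm.comp (algebraMap k (Matrix (Fin n) (Fin n) k)))
      = (algebraMap k (Matrix (Fin n) (Fin n) k)).comp σ := by
    ext d i j
    simp only [RingHom.comp_apply, hSmdef, RingHom.mapMatrix_apply, Matrix.map_apply,
      Matrix.algebraMap_matrix_apply]
    split <;> simp
  have hMg : Polynomial.aeval (M.map (fun x => x ^ q)) g = 0 := by
    have h2 := congrArg Sm hMf
    rw [map_zero, Polynomial.aeval_def, Polynomial.hom_eval₂, e1, e2] at h2
    rw [Polynomial.aeval_def, hgdef, Polynomial.eval₂_map]
    exact h2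
  have hT : Polynomial.aeval ((M.map (fun x => x ^ q))ᵀ) g = 0 := by
    rw [aeval_transpose', hMg, Matrix.transpose_zero]
  set T := (M.map (fun x => x ^ q))ᵀ with hTdef
  -- T is invertible
  have hMunit : IsUnit M := by
    rw [hM]
    exact ⟨⟨_, Algebra.leftMulMatrix b α⁻¹,
      by rw [← _root_.map_mul, mul_inv_cancel₀ hα0, _root_.map_one],
      by rw [← _root_.map_mul, inv_mul_cancel₀ hα0, _root_.map_one]⟩, rfl⟩
  have hTdet : IsUnit T.det := by
    rw [hTdef, Matrix.det_transpose]
    have h4 : IsUnit (M.map (fun x => x ^ q)) := e2 ▸ hMunit.map Sm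
    exact (Matrix.isUnit_iff_isUnit_det _).mp h4
  have hTinv : Invertible T := Matrix.invertibleOfIsUnitDet T hTdet
  have hNrev : Polynomial.aeval T⁻¹ g.reverse = 0 := by
    have h5 := aeval_reverse_mul_pow' T g
    rw [hT, Matrix.invOf_eq_nonsing_inv] at h5
    have hTu : IsUnit (T ^ g.natDegree) := ((Matrix.isUnit_iff_isUnit_det T).mpr hTdet).pow _
    exact (IsUnit.mul_left_eq_zero hTu).mp h5
  rw [hh, hhC, _root_.map_mul, Polynomial.aeval_C] at hNrev
  have hcu : IsUnit (algebraMap k (Matrix (Fin n) (Fin n) k) c) :=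
    (Ne.isUnit hc0).map (algebraMap k (Matrix (Fin n) (Fin n) k))
  exact (IsUnit.mul_left_eq_zero hcu).mp hNrev
end

section
/- Let k be a field and l a field extension of k of finite degree n. Let ρ₁, ρ₂ : l → M_n(k) be two k-algebra homomorphisms. Then the set {X ∈ M_n(k) : X·ρ₂(β) = ρ₁(β)·X for all β ∈ l} is a k-subspace of M_n(k) of dimension n over k. In particular, if k is a finite field with |k| = Q elements, this set has exactly Q^n elements. -/
open Matrix

section Aux

variable {k l : Type*} [Field k] [Field l] [Algebra k l]
variable {n : ℕ}
variable (ρ₁ ρ₂ : l →ₐ[k] Matrix (Fin n) (Fin n) k)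

/-- the intertwiner set as a submodule -/
def interW : Submodule k (Matrix (Fin n) (Fin n) k) where
  carrier := {X | ∀ β : l, X * ρ₂ β = ρ₁ β * X}
  add_mem' := by
    intro a b ha hb β
    simp [add_mul, mul_add, ha β, hb β]
  zero_mem' := by intro β; simp
  smul_mem' := by
    intro c X hX β
    simp only [Matrix.smul_mul, Matrix.mul_smul, hX β]

lemma interW_equiv (hdeg : Module.finrank k l = n) (hn : 0 < n) :
    Nonempty ((interW ρ₁ ρ₂) ≃ₗ[k] (Fin n → k)) := by
  classical
  haveI : FiniteDimensional k l := FiniteDimensional.of_finrank_pos (hdeg ▸ hn)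
  set v₀ : Fin n → k := Pi.single (⟨0, hn⟩ : Fin n) (1 : k) with hv₀def
  have hv₀ : v₀ ≠ 0 := by
    intro h
    have := congrFun h ⟨0, hn⟩
    simp [hv₀def] at this
  -- the map β ↦ ρ₂ β *ᵥ v₀ is a k-linear bijection l ≃ (Fin n → k)
  set φ : l →ₗ[k] (Fin n → k) :=
    { toFun := fun β => (ρ₂ β) *ᵥ v₀
      map_add' := by intro a b; simp [add_mulVec]
      map_smul' := by intro c a; simp [smul_mulVec] } with hφdef
  have hφinj : Function.Injective φ := by
    rw [injective_iff_map_eq_zero]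
    intro β hβ
    by_contra hβ0
    apply hv₀
    have : ρ₂ β⁻¹ *ᵥ (ρ₂ β *ᵥ v₀) = ρ₂ β⁻¹ *ᵥ 0 := by
      rw [show (ρ₂ β *ᵥ v₀) = 0 from hβ]
    rwa [Matrix.mulVec_mulVec, ← _root_.map_mul, inv_mul_cancel₀ hβ0, _root_.map_one,
      Matrix.one_mulVec, Matrix.mulVec_zero] at this
  have hφsurj : Function.Surjective φ := by
    rw [← LinearMap.injective_iff_surjective_of_finrank_eq_finrank
      (by simp [hdeg, Module.finrank_fin_fun])]
    exact hφinj
  set e : l ≃ₗ[k] (Fin n → k) := LinearEquiv.ofBijective φ ⟨hφinj, hφsurj⟩ with hedef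
  have heapp : ∀ β : l, e β = ρ₂ β *ᵥ v₀ := fun β => rfl
  -- the evaluation map
  set E : (interW ρ₁ ρ₂) →ₗ[k] (Fin n → k) :=
    { toFun := fun X => (X : Matrix (Fin n) (Fin n) k) *ᵥ v₀
      map_add' := by intro a b; simp [add_mulVec]
      map_smul' := by intro c a; simp [smul_mulVec] } with hEdef
  have hEinj : Function.Injective E := by
    rw [injective_iff_map_eq_zero]
    rintro ⟨X, hX⟩ h0
    have h0' : X *ᵥ v₀ = 0 := h0
    have hall : ∀ w : Fin n → k, X *ᵥ w = 0 := by
      intro w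
      obtain ⟨β, hβ⟩ := hφsurj w
      have : X *ᵥ (ρ₂ β *ᵥ v₀) = 0 := by
        rw [Matrix.mulVec_mulVec, hX β, ← Matrix.mulVec_mulVec, h0',
          Matrix.mulVec_zero]
      rwa [show (ρ₂ β *ᵥ v₀) = w from hβ] at this
    have : X = 0 := by
      apply Matrix.toLin'.injective
      apply LinearMap.ext
      intro w
      simp [Matrix.toLin'_apply, hall w]
    exact Subtype.ext this
  have hEsurj : Function.Surjective E := by
    intro u
    set ψ : l →ₗ[k] (Fin n → k) :=
      { toFun := fun β => (ρ₁ β) *ᵥ u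
        map_add' := by intro a b; simp [add_mulVec]
        map_smul' := by intro c a; simp [smul_mulVec] } with hψdef
    set g : (Fin n → k) →ₗ[k] (Fin n → k) := ψ.comp e.symm.toLinearMap with hgdef
    have hg : ∀ β : l, g (ρ₂ β *ᵥ v₀) = ρ₁ β *ᵥ u := by
      intro β
      have : g (e β) = ψ β := by simp [hgdef]
      simpa [heapp, hψdef] using this
    set X : Matrix (Fin n) (Fin n) k := LinearMap.toMatrix' g with hXdef
    have hXapp : ∀ w, X *ᵥ w = g w := by
      intro w
      rw [hXdef, ← Matrix.toLin'_apply, Matrix.toLin'_toMatrix']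
    have hXmem : X ∈ interW ρ₁ ρ₂ := by
      intro β
      apply Matrix.toLin'.injective
      apply LinearMap.ext
      intro w
      obtain ⟨γ, hγ⟩ := hφsurj w
      have hγ' : (ρ₂ γ *ᵥ v₀) = w := hγ
      simp only [Matrix.toLin'_apply]
      rw [← hγ']
      have hL : (X * ρ₂ β) *ᵥ (ρ₂ γ *ᵥ v₀) = ρ₁ (β*γ) *ᵥ u := by
        rw [Matrix.mulVec_mulVec, mul_assoc, ← _root_.map_mul, ← Matrix.mulVec_mulVec,
          hXapp, hg]
      have hR : (ρ₁ β * X) *ᵥ (ρ₂ γ *ᵥ v₀) = ρ₁ (β*γ) *ᵥ u := by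
        rw [← Matrix.mulVec_mulVec, hXapp, hg, Matrix.mulVec_mulVec, ← _root_.map_mul]
      exact hL.trans hR.symm
    refine ⟨⟨X, hXmem⟩, ?_⟩
    show X *ᵥ v₀ = u
    have h1 : (ρ₂ (1:l) *ᵥ v₀) = v₀ := by simp
    rw [hXapp, ← h1, hg, _root_.map_one, Matrix.one_mulVec]
  exact ⟨LinearEquiv.ofBijective E ⟨hEinj, hEsurj⟩⟩

end Aux

/-- Let `l/k` be a field extension of degree `n` and `ρ₁, ρ₂ : l → M_n(k)` two
`k`-algebra homomorphisms.  The space of intertwiners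
`{X | X·ρ₂(β) = ρ₁(β)·X for all β}` is a `k`-subspace of `M_n(k)` of dimension `n`;
in particular, over a finite field with `Q` elements it has exactly `Q^n` elements. -/
theorem intertwiner_space_dim (k l : Type*) [Field k] [Field l] [Algebra k l]
    (n : ℕ) (hdeg : Module.finrank k l = n)
    (ρ₁ ρ₂ : l →ₐ[k] Matrix (Fin n) (Fin n) k) :
    (∃ W : Submodule k (Matrix (Fin n) (Fin n) k),
        (W : Set (Matrix (Fin n) (Fin n) k)) = {X | ∀ β : l, X * ρ₂ β = ρ₁ β * X} ∧
        Module.finrank k W = n) ∧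
    (Finite k →
      Nat.card {X : Matrix (Fin n) (Fin n) k | ∀ β : l, X * ρ₂ β = ρ₁ β * X}
        = Nat.card k ^ n) := by
  classical
  have hWset : ((interW ρ₁ ρ₂ : Submodule k (Matrix (Fin n) (Fin n) k)) :
      Set (Matrix (Fin n) (Fin n) k)) = {X | ∀ β : l, X * ρ₂ β = ρ₁ β * X} := rfl
  rcases Nat.eq_zero_or_pos n with h0 | hn
  · subst h0
    have hsub : Subsingleton (Matrix (Fin 0) (Fin 0) k) := by
      constructor; intro a b; ext i; exact i.elim0
    constructor
    · refine ⟨interW ρ₁ ρ₂, hWset, ?_⟩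
      exact Module.finrank_zero_of_subsingleton
    · intro _
      have : Nat.card {X : Matrix (Fin 0) (Fin 0) k | ∀ β : l, X * ρ₂ β = ρ₁ β * X} = 1 := by
        rw [Nat.card_eq_one_iff_unique]
        refine ⟨⟨fun a b => Subtype.ext (hsub.allEq _ _)⟩, ⟨⟨0, fun β => hsub.allEq _ _⟩⟩⟩
      simp [this]
  · obtain ⟨e⟩ := interW_equiv ρ₁ ρ₂ hdeg hn
    constructor
    · exact ⟨interW ρ₁ ρ₂, hWset, by rw [e.finrank_eq, Module.finrank_fin_fun]⟩
    · intro hfin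
      have h1 : Nat.card {X : Matrix (Fin n) (Fin n) k | ∀ β : l, X * ρ₂ β = ρ₁ β * X}
          = Nat.card (interW ρ₁ ρ₂) := by
        apply Nat.card_congr
        exact Equiv.setCongr hWset.symm
      rw [h1, Nat.card_congr e.toEquiv, Nat.card_fun]
      simp
end

section
/- Let G be a group and H a subgroup of G. Let A, B, C be subgroups of G contained in H such that H = A·B·C as sets (every element of H is a product a·b·c with a ∈ A, b ∈ B, c ∈ C). Let w₀, w₁ ∈ G satisfy w₀·A·w₀^{-1} ⊆ C, w₀·B·w₀^{-1} = B, and w₁^{-1}·C·w₁ ⊆ A. Then, as subsets of G, H·w₀·H·w₁·H = H·(w₀w₁)·H. -/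
open scoped Pointwise

/-- If a subgroup `H` of `G` has an Iwahori-type factorization `H = A·B·C` into
subgroups, and `w₀, w₁ ∈ G` satisfy `w₀ A w₀⁻¹ ⊆ C`, `w₀ B w₀⁻¹ = B` and
`w₁⁻¹ C w₁ ⊆ A`, then `H w₀ H w₁ H = H (w₀w₁) H` as subsets of `G`. -/
theorem double_coset_product {G : Type*} [Group G] (H A B C : Subgroup G)
    (hA : A ≤ H) (hB : B ≤ H) (hC : C ≤ H)
    (hfact : (H : Set G) = (A : Set G) * (B : Set G) * (C : Set G))
    (w₀ w₁ : G)
    (h0A : ∀ a ∈ A, w₀ * a * w₀⁻¹ ∈ C)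
    (h0B : (fun b => w₀ * b * w₀⁻¹) '' (B : Set G) = (B : Set G))
    (h1C : ∀ c ∈ C, w₁⁻¹ * c * w₁ ∈ A) :
    (H : Set G) * {w₀} * (H : Set G) * {w₁} * (H : Set G)
      = (H : Set G) * {w₀ * w₁} * (H : Set G) := by
  ext x
  simp only [Set.mem_mul, Set.mem_singleton_iff, SetLike.mem_coe]
  constructor
  · rintro ⟨_, ⟨_, ⟨_, ⟨h1, hh1, y0, hy0, rfl⟩, h2, hh2, rfl⟩, y1, hy1, rfl⟩, h3, hh3, rfl⟩
    have hh2' : h2 ∈ (A : Set G) * (B : Set G) * (C : Set G) := hfact ▸ hh2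
    obtain ⟨_, ⟨a, ha, b, hb, rfl⟩, c, hc, rfl⟩ := hh2'
    have hb' : w₀ * b * w₀⁻¹ ∈ B :=
      show w₀ * b * w₀⁻¹ ∈ (B : Set G) from h0B ▸ ⟨b, hb, rfl⟩
    refine ⟨h1 * (w₀ * a * w₀⁻¹) * (w₀ * b * w₀⁻¹) * (w₀ * w₁),
      ⟨h1 * (w₀ * a * w₀⁻¹) * (w₀ * b * w₀⁻¹),
        mul_mem (mul_mem hh1 (hC (h0A a ha))) (hB hb'), w₀ * w₁, rfl, rfl⟩,
      (w₁⁻¹ * c * w₁) * h3, mul_mem (hA (h1C c hc)) hh3, by rw [hy0, hy1]; group⟩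
  · rintro ⟨_, ⟨h1, hh1, y, hy, rfl⟩, h3, hh3, rfl⟩
    subst hy
    exact ⟨h1 * w₀ * 1 * w₁, ⟨h1 * w₀ * 1, ⟨h1 * w₀, ⟨h1, hh1, w₀, rfl, rfl⟩,
      1, one_mem H, rfl⟩, w₁, rfl, rfl⟩, h3, hh3, by group⟩
end
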